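/- arXiv:1512.03200 — 5 statements merged into one kernel-verified Lean document; each statement's English description precedes it below -/
import Mathlib

section
/- Let G be a graph on vertex set V, M a symmetric V×V matrix, d = corank(M), and U the d×V matrix whose rows form a basis of ker(M); write u_i for the i-th column of U. Then there exists a nonzero symmetric V×V matrix X with MX = 0 and X_{ij} = 0 whenever i = j or ij ∈ E, if and only if there exists a nonzero symmetric d×d matrix N such that u_iᵀ N u_i = 0 for all i ∈ V and u_iᵀ N u_j = 0 for all edges ij ∈ E. -/
open Matrix

private lemma entry_eq {V : Type*} [Fintype V] {d : ℕ}
    (U : Matrix (Fin d) V ℝ) (N : Matrix (Fin d) (Fin d) ℝ) (i j : V) :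
    (Uᵀ * N * U) i j = (fun k => U k i) ⬝ᵥ N.mulVec (fun k => U k j) := by
  simp only [Matrix.mul_apply, Matrix.mulVec, dotProduct, transpose_apply,
    Finset.sum_mul, Finset.mul_sum]
  rw [Finset.sum_comm]
  exact Finset.sum_congr rfl fun k _ => Finset.sum_congr rfl fun l _ => by ring

/-- There is a nonzero symmetric `X` with `M * X = 0` vanishing on the diagonal and on edges
iff there is a nonzero symmetric `d × d` matrix `N` with `u_iᵀ N u_i = 0` for all vertices `i`
and `u_iᵀ N u_j = 0` for all edges `ij`, where `u_i` is the `i`-th column of `U` and the rows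
of `U` form a basis of `ker M`. -/
theorem stmt_1 {V : Type*} [Fintype V] [DecidableEq V] {d : ℕ}
    (G : SimpleGraph V) (M : Matrix V V ℝ) (hM : M.IsHermitian)
    (U : Matrix (Fin d) V ℝ)
    (b : Module.Basis (Fin d) ℝ (LinearMap.ker M.mulVecLin))
    (hU : ∀ i : Fin d, ((b i : V → ℝ)) = U i) :
    (∃ X : Matrix V V ℝ, X ≠ 0 ∧ X.IsHermitian ∧ M * X = 0 ∧
        ∀ i j : V, (i = j ∨ G.Adj i j) → X i j = 0) ↔
    (∃ N : Matrix (Fin d) (Fin d) ℝ, N ≠ 0 ∧ N.IsHermitian ∧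
        (∀ i : V, (fun k => U k i) ⬝ᵥ N.mulVec (fun k => U k i) = 0) ∧
        (∀ i j : V, G.Adj i j → (fun k => U k i) ⬝ᵥ N.mulVec (fun k => U k j) = 0)) := by
  classical
  -- rows of U are in the kernel of M
  have hker : ∀ k : Fin d, M.mulVec (U k) = 0 := by
    intro k
    rw [← hU k]
    exact (b k).2
  -- M * Uᵀ = 0
  have hMU : M * Uᵀ = 0 := by
    ext i k
    have := congrFun (hker k) i
    simpa [Matrix.mul_apply, Matrix.mulVec, dotProduct] using this
  -- rows of U are linearly independent
  have hind : LinearIndependent ℝ (fun k => U k) := by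
    have h1 : LinearIndependent ℝ (fun k => ((b k : V → ℝ))) :=
      b.linearIndependent.map' (LinearMap.ker M.mulVecLin).subtype
        (Submodule.ker_subtype _)
    rwa [funext hU] at h1
  -- the Gram matrix U * Uᵀ is invertible
  have hGram : IsUnit (U * Uᵀ) := by
    rw [← Matrix.mulVec_injective_iff_isUnit]
    have hkerU : LinearMap.ker (Uᵀ).mulVecLin = ⊥ := by
      rw [LinearMap.ker_eq_bot]
      intro x y hxy
      have : (Uᵀ).mulVec x = (Uᵀ).mulVec y := hxy
      rw [Matrix.mulVec_transpose, Matrix.mulVec_transpose] at this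
      exact Matrix.vecMul_injective_iff.mpr hind this
    have h2 : LinearMap.ker ((Uᵀ)ᵀ * Uᵀ).mulVecLin = ⊥ := by
      rw [Matrix.ker_mulVecLin_transpose_mul_self, hkerU]
    rw [transpose_transpose] at h2
    intro x y hxy
    have : (U * Uᵀ).mulVecLin x = (U * Uᵀ).mulVecLin y := hxy
    exact (LinearMap.ker_eq_bot.mp h2) this
  have hW' : (U * Uᵀ) * (U * Uᵀ)⁻¹ = 1 :=
    Matrix.mul_nonsing_inv _ ((Matrix.isUnit_iff_isUnit_det _).mp hGram)
  set W : Matrix V (Fin d) ℝ := Uᵀ * (U * Uᵀ)⁻¹ with hWdef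
  have hUW : U * W = 1 := by
    rw [hWdef, ← Matrix.mul_assoc, hW']
  constructor
  · rintro ⟨X, hX0, hXh, hMX, hXe⟩
    have hXs : Xᵀ = X := hXh
    -- columns of X lie in the span of the rows of U
    have hcol : ∀ j : V, ∃ c : Fin d → ℝ, ∑ k, c k • U k = fun i => X i j := by
      intro j
      have hcolker : (fun i => X i j) ∈ LinearMap.ker M.mulVecLin := by
        rw [LinearMap.mem_ker]
        ext i
        have := congrFun (congrFun hMX i) j
        simpa [Matrix.mul_apply, Matrix.mulVec, dotProduct] using this
      have hspan : Submodule.span ℝ (Set.range fun k => U k) =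
          LinearMap.ker M.mulVecLin := by
        rw [← funext hU]
        have := b.span_eq
        apply_fun Submodule.map (LinearMap.ker M.mulVecLin).subtype at this
        rwa [Submodule.map_span, Submodule.map_top, Submodule.range_subtype,
          ← Set.range_comp] at this
      rw [← hspan] at hcolker
      exact (Submodule.mem_span_range_iff_exists_fun ℝ).mp hcolker
    choose c hc using hcol
    set C : Matrix (Fin d) V ℝ := fun k j => c j k with hCdef
    have hXC : X = Uᵀ * C := by
      ext i j
      have := congrFun (hc j) i
      simp only [Finset.sum_apply, Pi.smul_apply, smul_eq_mul] at this
      rw [Matrix.mul_apply]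
      rw [← this]
      exact Finset.sum_congr rfl fun k _ => by simp [hCdef, mul_comm]
    have hXC' : X = Cᵀ * U := by
      calc X = Xᵀ := hXs.symm
      _ = (Uᵀ * C)ᵀ := by rw [← hXC]
      _ = Cᵀ * U := by rw [Matrix.transpose_mul, transpose_transpose]
    -- X * (W * U) = X and (W * U)ᵀ * X = X
    have hXWU : X * (W * U) = X := by
      rw [hXC', Matrix.mul_assoc Cᵀ U (W * U), ← Matrix.mul_assoc U W U, hUW,
        Matrix.one_mul, ← hXC']
    have hWUX : (W * U)ᵀ * X = X := by
      have := congrArg Matrix.transpose hXWU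
      rwa [Matrix.transpose_mul, hXs] at this
    refine ⟨Wᵀ * X * W, ?_, ?_, ?_, ?_⟩
    · intro hN0
      apply hX0
      have : Uᵀ * (Wᵀ * X * W) * U = X := by
        calc Uᵀ * (Wᵀ * X * W) * U = (W * U)ᵀ * X * (W * U) := by
              simp only [Matrix.transpose_mul, transpose_transpose, Matrix.mul_assoc]
        _ = X := by rw [Matrix.mul_assoc, hXWU, hWUX]
      rw [hN0] at this
      simpa using this.symm
    · show (Wᵀ * X * W)ᴴ = Wᵀ * X * W
      have : (Wᵀ * X * W)ᵀ = Wᵀ * X * W := by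
        simp [Matrix.transpose_mul, hXs, Matrix.mul_assoc]
      rwa [Matrix.conjTranspose_eq_transpose_of_trivial]
    · intro i
      rw [← entry_eq]
      have : Uᵀ * (Wᵀ * X * W) * U = X := by
        calc Uᵀ * (Wᵀ * X * W) * U = (W * U)ᵀ * X * (W * U) := by
              simp only [Matrix.transpose_mul, transpose_transpose, Matrix.mul_assoc]
        _ = X := by rw [Matrix.mul_assoc, hXWU, hWUX]
      rw [this]
      exact hXe i i (Or.inl rfl)
    · intro i j hij
      rw [← entry_eq]
      have : Uᵀ * (Wᵀ * X * W) * U = X := by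
        calc Uᵀ * (Wᵀ * X * W) * U = (W * U)ᵀ * X * (W * U) := by
              simp only [Matrix.transpose_mul, transpose_transpose, Matrix.mul_assoc]
        _ = X := by rw [Matrix.mul_assoc, hXWU, hWUX]
      rw [this]
      exact hXe i j (Or.inr hij)
  · rintro ⟨N, hN0, hNh, hNd, hNe⟩
    have hNs : Nᵀ = N := hNh
    refine ⟨Uᵀ * N * U, ?_, ?_, ?_, ?_⟩
    · intro hX0
      apply hN0
      have : Wᵀ * (Uᵀ * N * U) * W = N := by
        calc Wᵀ * (Uᵀ * N * U) * W = (U * W)ᵀ * N * (U * W) := by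
              simp only [Matrix.transpose_mul, transpose_transpose, Matrix.mul_assoc]
        _ = N := by rw [hUW]; simp
      rw [hX0] at this
      simpa using this.symm
    · show (Uᵀ * N * U)ᴴ = Uᵀ * N * U
      have : (Uᵀ * N * U)ᵀ = Uᵀ * N * U := by
        simp [Matrix.transpose_mul, hNs, Matrix.mul_assoc]
      rwa [Matrix.conjTranspose_eq_transpose_of_trivial]
    · calc M * (Uᵀ * N * U) = M * Uᵀ * (N * U) := by
            simp only [Matrix.mul_assoc]
      _ = 0 := by rw [hMU, Matrix.zero_mul]
    · rintro i j (rfl | hij)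
      · rw [entry_eq]; exact hNd i
      · rw [entry_eq]; exact hNe i j hij
end

section
/- Let Q be a homogeneous quadric in ℝ⁴ (zero set of a nonzero symmetric quadratic form) that is not the union of two linear hyperplanes. If a line ℓ (1-dimensional linear subspace) is contained in three distinct 2-dimensional linear subspaces P₁, P₂, P₃ each contained in Q, then ℓ is contained in every 2-dimensional linear subspace contained in Q. -/
open Matrix

private lemma polar4 (N : Matrix (Fin 4) (Fin 4) ℝ) (hN : Nᵀ = N) {S : Submodule ℝ (Fin 4 → ℝ)}
    (h : ∀ x ∈ S, x ⬝ᵥ N *ᵥ x = 0) {x y : Fin 4 → ℝ} (hx : x ∈ S) (hy : y ∈ S) :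
    x ⬝ᵥ N *ᵥ y = 0 := by
  have hsymm : y ⬝ᵥ N *ᵥ x = x ⬝ᵥ N *ᵥ y := by
    rw [dotProduct_mulVec, ← mulVec_transpose, hN, dotProduct_comm]
  have h1 := h _ (S.add_mem hx hy)
  have h2 := h _ hx
  have h3 := h _ hy
  simp only [add_dotProduct, mulVec_add, dotProduct_add] at h1
  linarith

private lemma span_zero4 (N : Matrix (Fin 4) (Fin 4) ℝ) (S : Set (Fin 4 → ℝ))
    (h : ∀ a ∈ S, ∀ b ∈ S, a ⬝ᵥ N *ᵥ b = 0) :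
    ∀ x ∈ Submodule.span ℝ S, ∀ y ∈ Submodule.span ℝ S, x ⬝ᵥ N *ᵥ y = 0 := by
  intro x hx
  induction hx using Submodule.span_induction with
  | mem a ha =>
      intro y hy
      induction hy using Submodule.span_induction with
      | mem b hb => exact h _ ha _ hb
      | zero => simp
      | add b c _ _ hb hc => simp [mulVec_add, dotProduct_add, hb, hc]
      | smul r b _ hb => simp [mulVec_smul, dotProduct_smul, hb]
  | zero => simp
  | add a b _ _ ha hb => intro y hy; simp [add_dotProduct, ha y hy, hb y hy]
  | smul r a _ ha => intro y hy; simp [smul_dotProduct, ha y hy]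

private lemma ker_rank3' (f : (Fin 4 → ℝ) →ₗ[ℝ] ℝ) (hf : f ≠ 0) :
    Module.finrank ℝ (LinearMap.ker f) = 3 := by
  have hsurj : Function.Surjective f := by
    obtain ⟨x, hx⟩ := DFunLike.ne_iff.mp hf
    simp only [LinearMap.zero_apply] at hx
    intro r
    exact ⟨(r / f x) • x, by simp [div_mul_cancel₀, hx]⟩
  have h1 := LinearMap.finrank_range_add_finrank_ker f
  rw [LinearMap.range_eq_top.mpr hsurj] at h1
  simp [finrank_top] at h1
  omega

private lemma finrank_sup_singleton' {P : Submodule ℝ (Fin 4 → ℝ)} {u : Fin 4 → ℝ}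
    (hu : u ∉ P) :
    Module.finrank ℝ ↥(P ⊔ Submodule.span ℝ {u}) = Module.finrank ℝ P + 1 := by
  have hu0 : u ≠ 0 := fun h => hu (h ▸ P.zero_mem)
  have hinf : P ⊓ Submodule.span ℝ {u} = ⊥ := by
    rw [eq_bot_iff]
    rintro x ⟨hxP, hxu⟩
    simp only [SetLike.mem_coe] at hxP hxu
    rw [Submodule.mem_span_singleton] at hxu
    obtain ⟨c, rfl⟩ := hxu
    rcases eq_or_ne c 0 with rfl | hc
    · simp
    · exact absurd (by simpa [smul_smul, inv_mul_cancel₀ hc] using P.smul_mem c⁻¹ hxP) hu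
  have := Submodule.finrank_sup_add_finrank_inf_eq P (Submodule.span ℝ {u})
  rw [hinf, finrank_span_singleton hu0] at this
  simpa using this

private lemma plane_eq' {P : Submodule ℝ (Fin 4 → ℝ)} {v u : Fin 4 → ℝ}
    (hP : Module.finrank ℝ P = 2) (hv : v ∈ P) (hu : u ∈ P) (hv0 : v ≠ 0)
    (hul : u ∉ Submodule.span ℝ {v}) : P = Submodule.span ℝ {v, u} := by
  have hspan : Submodule.span ℝ ({v, u} : Set (Fin 4 → ℝ))
      = Submodule.span ℝ {v} ⊔ Submodule.span ℝ {u} := by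
    rw [Submodule.span_insert]
  have hrank : Module.finrank ℝ (Submodule.span ℝ ({v, u} : Set (Fin 4 → ℝ))) = 2 := by
    rw [hspan, finrank_sup_singleton' hul, finrank_span_singleton hv0]
  refine (Submodule.eq_of_le_of_finrank_eq ?_ (by rw [hrank, hP])).symm
  rw [Submodule.span_le]
  rintro x (rfl | rfl) <;> simpa [hv, hu]

private lemma keyM (N : Matrix (Fin 4) (Fin 4) ℝ) (hN : Nᵀ = N) (hN0 : N ≠ 0)
    (Q : Set (Fin 4 → ℝ)) (hQ : Q = {x : Fin 4 → ℝ | x ⬝ᵥ N.mulVec x = 0})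
    (hnot : ¬ ∃ H₁ H₂ : Submodule ℝ (Fin 4 → ℝ),
      Module.finrank ℝ H₁ = 3 ∧ Module.finrank ℝ H₂ = 3 ∧
      Q = (H₁ : Set (Fin 4 → ℝ)) ∪ (H₂ : Set (Fin 4 → ℝ)))
    (T : Submodule ℝ (Fin 4 → ℝ)) (hT : Module.finrank ℝ T = 3)
    (hiso : ∀ x ∈ T, ∀ y ∈ T, x ⬝ᵥ N *ᵥ y = 0) : False := by
  have hV : Module.finrank ℝ (Fin 4 → ℝ) = 4 := by simp
  have hq : Module.finrank ℝ ((Fin 4 → ℝ) ⧸ T) = 1 := by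
    have := Submodule.finrank_quotient_add_finrank T
    rw [hT, hV] at this; omega
  obtain ⟨e⟩ : Nonempty (((Fin 4 → ℝ) ⧸ T) ≃ₗ[ℝ] ℝ) :=
    FiniteDimensional.nonempty_linearEquiv_of_finrank_eq (by simp [hq])
  set φ : (Fin 4 → ℝ) →ₗ[ℝ] ℝ := e.toLinearMap ∘ₗ T.mkQ with hφ
  have hker : ∀ y, φ y = 0 ↔ y ∈ T := by
    intro y
    simp [hφ, LinearMap.comp_apply, e.map_eq_zero_iff, Submodule.Quotient.mk_eq_zero]
  obtain ⟨w₀, hw₀⟩ : ∃ w₀, w₀ ∉ T := by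
    by_contra h
    push_neg at h
    have : T = ⊤ := Submodule.eq_top_iff'.mpr h
    rw [this, finrank_top, hV] at hT; omega
  have hφw₀ : φ w₀ ≠ 0 := fun h => hw₀ ((hker w₀).mp h)
  set w : Fin 4 → ℝ := (φ w₀)⁻¹ • w₀ with hw
  have hφw : φ w = 1 := by simp [hw, _root_.map_smul, inv_mul_cancel₀ hφw₀]
  have key : ∀ y, y ⬝ᵥ N *ᵥ y
      = φ y * (y ⬝ᵥ N *ᵥ w + w ⬝ᵥ N *ᵥ y - φ y * (w ⬝ᵥ N *ᵥ w)) := by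
    intro y
    have hmem : y - φ y • w ∈ T := (hker _).mp (by simp [map_sub, _root_.map_smul, hφw])
    have h0 := hiso _ hmem _ hmem
    simp only [sub_dotProduct, dotProduct_sub, mulVec_sub, mulVec_smul, smul_dotProduct,
      dotProduct_smul, smul_eq_mul] at h0
    linear_combination h0
  set g : (Fin 4 → ℝ) →ₗ[ℝ] ℝ :=
    { toFun := fun y => y ⬝ᵥ N *ᵥ w + w ⬝ᵥ N *ᵥ y - φ y * (w ⬝ᵥ N *ᵥ w)
      map_add' := by
        intro a b
        simp only [add_dotProduct, mulVec_add, dotProduct_add, map_add]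
        ring
      map_smul' := by
        intro r a
        simp only [smul_dotProduct, mulVec_smul, dotProduct_smul, _root_.map_smul,
          smul_eq_mul, RingHom.id_apply]
        ring } with hg
  have gdef : ∀ y, g y = y ⬝ᵥ N *ᵥ w + w ⬝ᵥ N *ᵥ y - φ y * (w ⬝ᵥ N *ᵥ w) := fun _ => rfl
  by_cases hg0 : g = 0
  · have hq0 : ∀ y, y ⬝ᵥ N *ᵥ y = 0 := by
      intro y
      rw [key y, ← gdef y, hg0]
      simp
    have hB : ∀ x y : Fin 4 → ℝ, x ⬝ᵥ N *ᵥ y = 0 := by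
      intro x y
      have hsymm : y ⬝ᵥ N *ᵥ x = x ⬝ᵥ N *ᵥ y := by
        rw [dotProduct_mulVec, ← mulVec_transpose, hN, dotProduct_comm]
      have h1 := hq0 (x + y)
      have h2 := hq0 x
      have h3 := hq0 y
      simp only [add_dotProduct, mulVec_add, dotProduct_add] at h1
      linarith
    apply hN0
    ext i j
    have := hB (Pi.single i 1) (Pi.single j 1)
    simpa [dotProduct, mulVec, Pi.single_apply, Finset.sum_ite_eq', Finset.mul_sum] using this
  · apply hnot
    exact ⟨T, LinearMap.ker g, hT, ker_rank3' g hg0, by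
      ext y
      rw [hQ]
      simp only [Set.mem_setOf_eq, Set.mem_union, SetLike.mem_coe, LinearMap.mem_ker]
      rw [key y, mul_eq_zero, ← gdef y, hker y]⟩

/-- Let `Q` be a homogeneous quadric in `ℝ⁴` not being the union of two hyperplanes.
If a line is contained in three distinct planes contained in `Q`, then it is contained in
every plane contained in `Q`. -/
theorem stmt_4 (N : Matrix (Fin 4) (Fin 4) ℝ) (hN : N.IsHermitian) (hN0 : N ≠ 0)
    (Q : Set (Fin 4 → ℝ)) (hQ : Q = {x : Fin 4 → ℝ | x ⬝ᵥ N.mulVec x = 0})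
    (hnot : ¬ ∃ H₁ H₂ : Submodule ℝ (Fin 4 → ℝ),
      Module.finrank ℝ H₁ = 3 ∧ Module.finrank ℝ H₂ = 3 ∧
      Q = (H₁ : Set (Fin 4 → ℝ)) ∪ (H₂ : Set (Fin 4 → ℝ)))
    (ℓ P₁ P₂ P₃ : Submodule ℝ (Fin 4 → ℝ))
    (hℓ : Module.finrank ℝ ℓ = 1)
    (hP₁ : Module.finrank ℝ P₁ = 2) (hP₂ : Module.finrank ℝ P₂ = 2)
    (hP₃ : Module.finrank ℝ P₃ = 2)
    (hne₁₂ : P₁ ≠ P₂) (hne₁₃ : P₁ ≠ P₃) (hne₂₃ : P₂ ≠ P₃)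
    (hℓ₁ : ℓ ≤ P₁) (hℓ₂ : ℓ ≤ P₂) (hℓ₃ : ℓ ≤ P₃)
    (hQ₁ : (P₁ : Set (Fin 4 → ℝ)) ⊆ Q) (hQ₂ : (P₂ : Set (Fin 4 → ℝ)) ⊆ Q)
    (hQ₃ : (P₃ : Set (Fin 4 → ℝ)) ⊆ Q) :
    ∀ P : Submodule ℝ (Fin 4 → ℝ), Module.finrank ℝ P = 2 →
      (P : Set (Fin 4 → ℝ)) ⊆ Q → ℓ ≤ P := by
  have hNt : Nᵀ = N := hN
  have hsymm : ∀ x y : Fin 4 → ℝ, x ⬝ᵥ N *ᵥ y = y ⬝ᵥ N *ᵥ x := by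
    intro x y
    rw [dotProduct_mulVec, ← mulVec_transpose, hNt, dotProduct_comm]
  -- the quadratic form vanishes on each Pᵢ (as a bilinear form)
  have hq : ∀ (S : Submodule ℝ (Fin 4 → ℝ)), (S : Set (Fin 4 → ℝ)) ⊆ Q →
      ∀ x ∈ S, x ⬝ᵥ N *ᵥ x = 0 := by
    intro S hS x hx
    have := hS hx
    rwa [hQ] at this
  -- obtain v spanning ℓ
  obtain ⟨v, hvℓ, hv0⟩ : ∃ v ∈ ℓ, v ≠ (0 : Fin 4 → ℝ) := by
    have : ℓ ≠ ⊥ := by intro hb; rw [hb] at hℓ; simp at hℓ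
    exact Submodule.exists_mem_ne_zero_of_ne_bot this
  have hℓspan : ℓ = Submodule.span ℝ {v} := by
    refine (Submodule.eq_of_le_of_finrank_eq ?_ ?_).symm
    · rwa [Submodule.span_le, Set.singleton_subset_iff]
    · rw [finrank_span_singleton hv0, hℓ]
  -- Step 1: N *ᵥ v = 0
  have hNv : N *ᵥ v = 0 := by
    by_contra hNv
    -- pick uᵢ ∈ Pᵢ \ ℓ
    have hgetu : ∀ (P : Submodule ℝ (Fin 4 → ℝ)), Module.finrank ℝ P = 2 → ℓ ≤ P →
        ∃ u ∈ P, u ∉ ℓ := by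
      intro P hP hle
      apply SetLike.not_le_iff_exists.mp
      intro h
      have := Submodule.finrank_mono h
      rw [hP, hℓ] at this; omega
    obtain ⟨u₁, hu₁P, hu₁ℓ⟩ := hgetu P₁ hP₁ hℓ₁
    obtain ⟨u₂, hu₂P, hu₂ℓ⟩ := hgetu P₂ hP₂ hℓ₂
    obtain ⟨u₃, hu₃P, hu₃ℓ⟩ := hgetu P₃ hP₃ hℓ₃
    rw [hℓspan] at hu₁ℓ hu₂ℓ hu₃ℓ
    have hvP₁ : v ∈ P₁ := hℓ₁ hvℓ
    have hvP₂ : v ∈ P₂ := hℓ₂ hvℓ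
    have hvP₃ : v ∈ P₃ := hℓ₃ hvℓ
    have hP₁eq : P₁ = Submodule.span ℝ {v, u₁} := plane_eq' hP₁ hvP₁ hu₁P hv0 hu₁ℓ
    have hP₂eq : P₂ = Submodule.span ℝ {v, u₂} := plane_eq' hP₂ hvP₂ hu₂P hv0 hu₂ℓ
    have hP₃eq : P₃ = Submodule.span ℝ {v, u₃} := plane_eq' hP₃ hvP₃ hu₃P hv0 hu₃ℓ
    -- uⱼ not in Pᵢ for i ≠ j
    have hnotin : ∀ (Pa Pb : Submodule ℝ (Fin 4 → ℝ)) (ub : Fin 4 → ℝ),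
        Module.finrank ℝ Pa = 2 → Module.finrank ℝ Pb = 2 →
        Pb = Submodule.span ℝ {v, ub} → Pa ≠ Pb →
        v ∈ Pa → ub ∉ Pa := by
      intro Pa Pb ub hPa hPb hPbeq hne hva hub
      apply hne
      refine (Submodule.eq_of_le_of_finrank_eq ?_ (by rw [hPb, hPa])).symm
      rw [hPbeq, Submodule.span_le]
      rintro x (rfl | rfl) <;> simpa [hva, hub]
    have hu₂P₁ : u₂ ∉ P₁ := hnotin P₁ P₂ u₂ hP₁ hP₂ hP₂eq hne₁₂ hvP₁
    have hu₃P₁ : u₃ ∉ P₁ := hnotin P₁ P₃ u₃ hP₁ hP₃ hP₃eq hne₁₃ hvP₁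
    have hu₃P₂ : u₃ ∉ P₂ := hnotin P₂ P₃ u₃ hP₂ hP₃ hP₃eq hne₂₃ hvP₂
    -- the functional y ↦ B(v, y)
    set f : (Fin 4 → ℝ) →ₗ[ℝ] ℝ :=
      { toFun := fun y => (N *ᵥ v) ⬝ᵥ y
        map_add' := fun a b => dotProduct_add _ a b
        map_smul' := fun r a => by simp [dotProduct_smul] } with hfdef
    have hfy : ∀ y, f y = v ⬝ᵥ N *ᵥ y := by
      intro y
      show (N *ᵥ v) ⬝ᵥ y = _
      rw [dotProduct_comm]
      exact hsymm y v
    have hf0 : f ≠ 0 := by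
      intro h
      have h2 : (N *ᵥ v) ⬝ᵥ (N *ᵥ v) = 0 := by
        have := congrArg (fun g => g (N *ᵥ v)) h
        simpa [hfdef] using this
      exact hNv (dotProduct_self_eq_zero.mp h2)
    -- pairwise vanishing facts
    have z_vv : v ⬝ᵥ N *ᵥ v = 0 := polar4 N hNt (hq P₁ hQ₁) hvP₁ hvP₁
    have z_vu₁ : v ⬝ᵥ N *ᵥ u₁ = 0 := polar4 N hNt (hq P₁ hQ₁) hvP₁ hu₁P
    have z_u₁v : u₁ ⬝ᵥ N *ᵥ v = 0 := polar4 N hNt (hq P₁ hQ₁) hu₁P hvP₁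
    have z_u₁u₁ : u₁ ⬝ᵥ N *ᵥ u₁ = 0 := polar4 N hNt (hq P₁ hQ₁) hu₁P hu₁P
    have z_vu₂ : v ⬝ᵥ N *ᵥ u₂ = 0 := polar4 N hNt (hq P₂ hQ₂) hvP₂ hu₂P
    have z_u₂v : u₂ ⬝ᵥ N *ᵥ v = 0 := polar4 N hNt (hq P₂ hQ₂) hu₂P hvP₂
    have z_u₂u₂ : u₂ ⬝ᵥ N *ᵥ u₂ = 0 := polar4 N hNt (hq P₂ hQ₂) hu₂P hu₂P
    have z_vu₃ : v ⬝ᵥ N *ᵥ u₃ = 0 := polar4 N hNt (hq P₃ hQ₃) hvP₃ hu₃P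
    -- T3 = span {v, u₁, u₂} has rank 3 and equals ker f
    have hsetsplit : ({v, u₁, u₂} : Set (Fin 4 → ℝ)) = {v, u₁} ∪ {u₂} := by
      ext x
      simp only [Set.mem_insert_iff, Set.mem_union, Set.mem_singleton_iff]
      tauto
    have hsplit : Submodule.span ℝ ({v, u₁, u₂} : Set (Fin 4 → ℝ))
        = P₁ ⊔ Submodule.span ℝ {u₂} := by
      rw [hsetsplit, Submodule.span_union, ← hP₁eq]
    have hT3rank : Module.finrank ℝ
        (Submodule.span ℝ ({v, u₁, u₂} : Set (Fin 4 → ℝ))) = 3 := by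
      rw [hsplit, finrank_sup_singleton' hu₂P₁, hP₁]
    have hT3le : Submodule.span ℝ ({v, u₁, u₂} : Set (Fin 4 → ℝ)) ≤ LinearMap.ker f := by
      rw [Submodule.span_le]
      rintro x (rfl | rfl | rfl) <;>
        simp only [SetLike.mem_coe, LinearMap.mem_ker, hfy]
      exacts [z_vv, z_vu₁, z_vu₂]
    have hT3eq : Submodule.span ℝ ({v, u₁, u₂} : Set (Fin 4 → ℝ)) = LinearMap.ker f :=
      Submodule.eq_of_le_of_finrank_eq hT3le (by rw [hT3rank, ker_rank3' f hf0])
    -- u₃ lies in T3, get coefficients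
    have hu₃mem : u₃ ∈ Submodule.span ℝ ({v, u₁, u₂} : Set (Fin 4 → ℝ)) := by
      rw [hT3eq, LinearMap.mem_ker, hfy]
      exact z_vu₃
    rw [Submodule.mem_span_insert] at hu₃mem
    obtain ⟨a, z', hz', hu₃eq⟩ := hu₃mem
    rw [Submodule.mem_span_insert] at hz'
    obtain ⟨b, z'', hz'', rfl⟩ := hz'
    rw [Submodule.mem_span_singleton] at hz''
    obtain ⟨c, rfl⟩ := hz''
    -- b ≠ 0 and c ≠ 0
    have hb : b ≠ 0 := by
      rintro rfl
      apply hu₃P₂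
      rw [hu₃eq]
      simp only [zero_smul, zero_add]
      exact P₂.add_mem (P₂.smul_mem a hvP₂) (P₂.smul_mem c hu₂P)
    have hc : c ≠ 0 := by
      rintro rfl
      apply hu₃P₁
      rw [hu₃eq]
      simp only [zero_smul, add_zero]
      exact P₁.add_mem (P₁.smul_mem a hvP₁) (P₁.smul_mem b hu₁P)
    -- B(u₁, u₂) = 0 from q(u₃) = 0
    have s12 : u₂ ⬝ᵥ N *ᵥ u₁ = u₁ ⬝ᵥ N *ᵥ u₂ := hsymm u₂ u₁
    have hqu₃ : u₃ ⬝ᵥ N *ᵥ u₃ = 0 := hq P₃ hQ₃ u₃ hu₃P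
    rw [hu₃eq] at hqu₃
    simp only [add_dotProduct, dotProduct_add, mulVec_add, mulVec_smul, smul_dotProduct,
      dotProduct_smul, smul_eq_mul] at hqu₃
    have hbc : (2 * b * c : ℝ) ≠ 0 := by
      intro h
      rcases mul_eq_zero.mp h with h' | h'
      · rcases mul_eq_zero.mp h' with h'' | h''
        · norm_num at h''
        · exact hb h''
      · exact hc h'
    have hB12 : u₁ ⬝ᵥ N *ᵥ u₂ = 0 := by
      apply mul_left_cancel₀ hbc
      rw [mul_zero]
      linear_combination hqu₃ - a * a * z_vv - a * b * z_vu₁ - a * c * z_vu₂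
        - b * a * z_u₁v - b * b * z_u₁u₁ - c * a * z_u₂v - c * c * z_u₂u₂ - b * c * s12
    have hB21 : u₂ ⬝ᵥ N *ᵥ u₁ = 0 := by rw [s12]; exact hB12
    -- T3 is totally isotropic: contradiction with keyM
    refine keyM N hNt hN0 Q hQ hnot _ hT3rank ?_
    apply span_zero4
    rintro x (rfl | rfl | rfl) y (rfl | rfl | rfl)
    exacts [z_vv, z_vu₁, z_vu₂, z_u₁v, z_u₁u₁, hB12, z_u₂v, hB21, z_u₂u₂]
  -- Step 2: conclude
  intro P hP hPQ
  rw [hℓspan, Submodule.span_le, Set.singleton_subset_iff]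
  by_contra hvP
  have hT : Module.finrank ℝ ↥(P ⊔ Submodule.span ℝ {v}) = 3 := by
    rw [finrank_sup_singleton' hvP, hP]
  refine keyM N hNt hN0 Q hQ hnot _ hT ?_
  have hunion : P ⊔ Submodule.span ℝ {v}
      = Submodule.span ℝ ((P : Set (Fin 4 → ℝ)) ∪ {v}) := by
    rw [Submodule.span_union, Submodule.span_eq]
  rw [hunion]
  apply span_zero4
  rintro a (haP | rfl) b (hbP | rfl)
  · exact polar4 N hNt (hq P hPQ) haP hbP
  · simp [hNv]
  · rw [hsymm]
    simp [hNv]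
  · simp [hNv]
end

section
/- Let H be a 3-dimensional linear subspace of ℝ⁴, let P and R be distinct 2-dimensional linear subspaces of H, and let Q' be a homogeneous quadric in H containing P ∪ R with Q' ≠ H. Then Q' = P ∪ R. -/
/-- Let `H` be a 3-dimensional real vector space, `P ≠ R` two 2-dimensional subspaces, and
`Q'` a homogeneous quadric in `H` (zero set of a nonzero quadratic form) containing
`P ∪ R` with `Q' ≠ H`. Then `Q' = P ∪ R`. -/
theorem stmt_5 {H : Type*} [AddCommGroup H] [Module ℝ H]
    (hdim : Module.finrank ℝ H = 3)
    (P R : Submodule ℝ H)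
    (hP : Module.finrank ℝ P = 2) (hR : Module.finrank ℝ R = 2) (hPR : P ≠ R)
    (q : QuadraticForm ℝ H) (hq : q ≠ 0)
    (Q' : Set H) (hQ' : Q' = {x : H | q x = 0})
    (hsub : (P : Set H) ∪ (R : Set H) ⊆ Q') (hne : Q' ≠ Set.univ) :
    Q' = (P : Set H) ∪ (R : Set H) := by
  have hfin : FiniteDimensional ℝ H := Module.finite_of_finrank_pos (by omega)
  -- q vanishes on P and on R
  have hqP : ∀ x ∈ P, q x = 0 := fun x hx => by
    have := hsub (Set.mem_union_left _ hx); rwa [hQ'] at this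
  have hqR : ∀ x ∈ R, q x = 0 := fun x hx => by
    have := hsub (Set.mem_union_right _ hx); rwa [hQ'] at this
  -- P ≰ R and R ≰ P
  have hPnR : ¬ P ≤ R := fun h => hPR (Submodule.eq_of_le_of_finrank_le h (by rw [hP, hR]))
  have hRnP : ¬ R ≤ P := fun h => hPR (Submodule.eq_of_le_of_finrank_le h (by rw [hP, hR])).symm
  -- P ⊔ R = ⊤
  have hsup : P ⊔ R = ⊤ := by
    apply Submodule.eq_top_of_finrank_eq
    have h1 : P < P ⊔ R := lt_of_le_of_ne le_sup_left (fun h => hRnP (h ▸ le_sup_right))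
    have h2 := Submodule.finrank_lt_finrank_of_lt h1
    have h3 := Submodule.finrank_le (P ⊔ R)
    omega
  -- finrank (P ⊓ R) = 1
  have hinf : Module.finrank ℝ ↥(P ⊓ R) = 1 := by
    have := Submodule.finrank_sup_add_finrank_inf_eq P R
    rw [hsup, hP, hR, finrank_top, hdim] at this
    omega
  -- pick e1 ∈ P ⊓ R nonzero
  obtain ⟨e1s, he1s⟩ := Module.finrank_pos_iff_exists_ne_zero.mp (by rw [hinf]; norm_num :
    0 < Module.finrank ℝ ↥(P ⊓ R))
  set e1 : H := (e1s : H) with he1def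
  have he1P : e1 ∈ P := e1s.2.1
  have he1R : e1 ∈ R := e1s.2.2
  have he1ne : e1 ≠ 0 := fun h => he1s (Subtype.ext h)
  -- pick v2 ∈ P \ R, v3 ∈ R \ P
  obtain ⟨v2, hv2P, hv2R⟩ := SetLike.not_le_iff_exists.mp hPnR
  obtain ⟨v3, hv3R, hv3P⟩ := SetLike.not_le_iff_exists.mp hRnP
  -- ![v2, e1, v3] is linearly independent
  have hind2 : LinearIndependent ℝ ![e1, v3] := by
    rw [linearIndependent_fin2]
    constructor
    · show v3 ≠ 0
      exact fun h => hv3P (h ▸ P.zero_mem)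
    · intro a h
      simp only [Matrix.cons_val_one, Matrix.head_cons, Matrix.cons_val_zero] at h
      have ha : a ≠ 0 := fun h0 => he1ne (by rw [← h, h0, zero_smul])
      exact hv3P (by
        have : v3 = a⁻¹ • e1 := by rw [← h, smul_smul, inv_mul_cancel₀ ha, one_smul]
        rw [this]; exact P.smul_mem _ he1P)
  have hind : LinearIndependent ℝ ![v2, e1, v3] := by
    have : (![v2, e1, v3] : Fin 3 → H) = Fin.cons v2 ![e1, v3] := by
      ext i; fin_cases i <;> rfl
    rw [this, linearIndependent_fin_cons]
    refine ⟨hind2, ?_⟩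
    intro hmem
    have : Set.range ![e1, v3] = {e1, v3} := by
      simp [Matrix.range_cons, Matrix.range_empty, Set.pair_comm]
    rw [this, Submodule.mem_span_pair] at hmem
    obtain ⟨a, c, hac⟩ := hmem
    have hcv3 : c • v3 = v2 - a • e1 := by rw [← hac]; abel
    by_cases hc : c = 0
    · apply hv2R
      have h0 : v2 - a • e1 = 0 := by rw [← hcv3, hc, zero_smul]
      have : v2 = a • e1 := by
        have := sub_eq_zero.mp h0; exact this
      rw [this]; exact R.smul_mem _ he1R
    · exact hv3P (by
        have : v3 = c⁻¹ • (v2 - a • e1) := by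
          rw [← hcv3, smul_smul, inv_mul_cancel₀ hc, one_smul]
        rw [this]
        exact P.smul_mem _ (P.sub_mem hv2P (P.smul_mem _ he1P)))
  -- build the basis
  let B : Module.Basis (Fin 3) ℝ H := basisOfLinearIndependentOfCardEqFinrank hind (by simp [hdim])
  have hB : ∀ i, B i = ![v2, e1, v3] i := fun i => by
    rw [coe_basisOfLinearIndependentOfCardEqFinrank]
  have hB0 : B 0 = v2 := hB 0
  have hB1 : B 1 = e1 := hB 1
  have hB2 : B 2 = v3 := hB 2
  -- decomposition of any x
  have hdecomp : ∀ x : H, x = B.repr x 0 • v2 + B.repr x 1 • e1 + B.repr x 2 • v3 := by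
    intro x
    conv_lhs => rw [← B.sum_repr x]
    rw [Fin.sum_univ_three, hB0, hB1, hB2]
  -- membership characterizations
  have hmemP : ∀ x : H, x ∈ P ↔ B.repr x 2 = 0 := by
    intro x
    constructor
    · intro hx
      by_contra hc
      apply hv3P
      have hxd := hdecomp x
      have h1 : (B.repr x 2) • v3 = x - (B.repr x 0 • v2 + B.repr x 1 • e1) := by
        rw [eq_sub_iff_add_eq]
        conv_rhs => rw [hxd]
        abel
      have hv3eq : v3 = (B.repr x 2)⁻¹ • (x - (B.repr x 0 • v2 + B.repr x 1 • e1)) := by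
        rw [← h1, smul_smul, inv_mul_cancel₀ hc, one_smul]
      rw [hv3eq]
      exact P.smul_mem _ (P.sub_mem hx (P.add_mem (P.smul_mem _ hv2P) (P.smul_mem _ he1P)))
    · intro h
      rw [hdecomp x, h, zero_smul, add_zero]
      exact P.add_mem (P.smul_mem _ hv2P) (P.smul_mem _ he1P)
  have hmemR : ∀ x : H, x ∈ R ↔ B.repr x 0 = 0 := by
    intro x
    constructor
    · intro hx
      by_contra hc
      apply hv2R
      have hxd := hdecomp x
      have h1 : (B.repr x 0) • v2 = x - (B.repr x 1 • e1 + B.repr x 2 • v3) := by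
        rw [eq_sub_iff_add_eq]
        conv_rhs => rw [hxd]
        abel
      have hv2eq : v2 = (B.repr x 0)⁻¹ • (x - (B.repr x 1 • e1 + B.repr x 2 • v3)) := by
        rw [← h1, smul_smul, inv_mul_cancel₀ hc, one_smul]
      rw [hv2eq]
      exact R.smul_mem _ (R.sub_mem hx (R.add_mem (R.smul_mem _ he1R) (R.smul_mem _ hv3R)))
    · intro h
      rw [hdecomp x, h, zero_smul, zero_add]
      exact R.add_mem (R.smul_mem _ he1R) (R.smul_mem _ hv3R)
  -- the key formula
  set t : ℝ := QuadraticMap.polar q v2 v3 with ht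
  have hkey : ∀ x : H, q x = B.repr x 0 * B.repr x 2 * t := by
    intro x
    have hx := hdecomp x
    set a := B.repr x 0
    set b := B.repr x 1
    set c := B.repr x 2
    have hu : b • e1 + c • v3 ∈ R := R.add_mem (R.smul_mem _ he1R) (R.smul_mem _ hv3R)
    have hsplit : x = a • v2 + (b • e1 + c • v3) := by rw [hx]; abel
    have hqadd : q x = q (a • v2) + q (b • e1 + c • v3)
        + QuadraticMap.polar q (a • v2) (b • e1 + c • v3) := by
      rw [hsplit]
      simp only [QuadraticMap.polar]
      ring
    rw [hqadd, hqR _ hu, QuadraticMap.map_smul, hqP _ hv2P,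
      QuadraticMap.polar_add_right, QuadraticMap.polar_smul_right,
      QuadraticMap.polar_smul_right, QuadraticMap.polar_smul_left,
      QuadraticMap.polar_smul_left]
    have hpe : QuadraticMap.polar q v2 e1 = 0 := by
      rw [QuadraticMap.polar, hqP _ (P.add_mem hv2P he1P), hqP _ hv2P, hqP _ he1P]
      ring
    rw [hpe]
    simp only [smul_eq_mul]
    ring
  -- t ≠ 0
  have htne : t ≠ 0 := by
    intro h0
    apply hne
    rw [hQ']
    ext x
    simp [hkey x, h0]
  -- conclude
  ext x
  rw [hQ', Set.mem_setOf_eq, hkey x, Set.mem_union, SetLike.mem_coe, SetLike.mem_coe,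
    hmemP, hmemR]
  constructor
  · intro h
    rcases mul_eq_zero.mp h with h | h
    · rcases mul_eq_zero.mp h with h | h
      · right; exact h
      · left; exact h
    · exact absurd h htne
  · rintro (h | h) <;> rw [h] <;> ring
end

section
/- Let C be a circuit (cycle graph) with vertex set V(C), and let u : V(C) → ℝ² \ {0} be such that for any path i–j–k of two incident edges in C, the vectors u_i and u_k lie strictly on opposite sides of the line spanned by u_j (equivalently det(u_i,u_j) and det(u_k,u_j) have opposite signs). Then there exists a well-signed C-matrix A (symmetric, A_{ij} < 0 for edges ij, A_{ij} = 0 for distinct nonadjacent i,j) with at least one negative eigenvalue such that the two coordinate functions i ↦ (u_i)₁ and i ↦ (u_i)₂ lie in ker(A). -/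
open Matrix

lemma aux_para (a b c d : ℝ) (h : a * d - b * c = 0) (hcd : c^2 + d^2 ≠ 0) :
    a = ((a*c + b*d)/(c^2+d^2)) * c ∧ b = ((a*c + b*d)/(c^2+d^2)) * d := by
  constructor
  · field_simp
    linear_combination d * h
  · field_simp
    linear_combination (-c) * h

lemma aux_sign (s1 s2 : ℝ) (h : s1 * s2 < 0) : -(1/|s1|) * s1 + -(1/|s2|) * s2 = 0 := by
  have h1 : s1 ≠ 0 := by intro h0; rw [h0] at h; simp at h
  have h2 : s2 ≠ 0 := by intro h0; rw [h0] at h; simp at h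
  rcases h1.lt_or_gt with h1' | h1' <;> rcases h2.lt_or_gt with h2' | h2'
  · nlinarith
  · rw [abs_of_neg h1', abs_of_pos h2']; field_simp; norm_num
  · rw [abs_of_pos h1', abs_of_neg h2']; field_simp; norm_num
  · nlinarith

/-- For a cycle `C` and `u : V(C) → ℝ² \ {0}` such that for any two incident edges `ij`, `jk`
the vectors `u i` and `u k` are strictly on opposite sides of the line spanned by `u j`,
there exists a well-signed `C`-matrix `A` with at least one negative eigenvalue whose kernel
contains both coordinate functions of `u`. -/
theorem stmt_8 {n : ℕ} (hn : 3 ≤ n) (u : Fin n → Fin 2 → ℝ) (hu : ∀ i, u i ≠ 0)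
    (hdet : ∀ i j k : Fin n, (SimpleGraph.cycleGraph n).Adj i j →
      (SimpleGraph.cycleGraph n).Adj j k → i ≠ k →
      (u i 0 * u j 1 - u i 1 * u j 0) * (u k 0 * u j 1 - u k 1 * u j 0) < 0) :
    ∃ A : Matrix (Fin n) (Fin n) ℝ, ∃ hA : A.IsHermitian,
      (∀ i j : Fin n, i ≠ j →
        ((SimpleGraph.cycleGraph n).Adj i j → A i j < 0) ∧
        (¬ (SimpleGraph.cycleGraph n).Adj i j → A i j = 0)) ∧
      (∃ i : Fin n, hA.eigenvalues i < 0) ∧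
      A.mulVec (fun i => u i 0) = 0 ∧ A.mulVec (fun i => u i 1) = 0 := by
  obtain ⟨m, rfl⟩ : ∃ m, n = m + 3 := ⟨n - 3, by omega⟩
  letI := Fin.instCommRing (m+3)
  -- basic Fin facts
  have h1ne : (1 : Fin (m+3)) ≠ 0 := one_ne_zero
  have h2ne : (2 : Fin (m+3)) ≠ 0 := by simp [Fin.ext_iff]; rw [Nat.mod_eq_of_lt (by omega)]; omega
  have hne1 : ∀ i : Fin (m+3), i + 1 ≠ i := fun i h => h1ne (add_eq_left.mp h)
  have hne2 : ∀ i : Fin (m+3), i - 1 ≠ i := fun i h => h1ne (sub_eq_self.mp h)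
  have hne3 : ∀ i : Fin (m+3), i + 1 ≠ i - 1 := by
    intro i h
    apply h2ne
    calc (2 : Fin (m+3)) = (i+1) - (i-1) := by ring
    _ = 0 := sub_eq_zero.mpr h
  -- adjacency characterization
  have hadj : ∀ i j : Fin (m+3), (SimpleGraph.cycleGraph (m+3)).Adj i j ↔ j = i + 1 ∨ j = i - 1 := by
    intro i j
    rw [show (SimpleGraph.cycleGraph (m+3)).Adj i j ↔ i - j = 1 ∨ j - i = 1 from
      SimpleGraph.cycleGraph_adj]
    constructor
    · rintro (h | h)
      · right; rw [← h]; ring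
      · left; rw [← h]; ring
    · rintro (h | h)
      · right; rw [h]; ring
      · left; rw [h]; ring
  have hadj1 : ∀ i : Fin (m+3), (SimpleGraph.cycleGraph (m+3)).Adj i (i + 1) := fun i =>
    (hadj i (i+1)).mpr (Or.inl rfl)
  have hadj2 : ∀ i : Fin (m+3), (SimpleGraph.cycleGraph (m+3)).Adj i (i - 1) := fun i =>
    (hadj i (i-1)).mpr (Or.inr rfl)
  -- determinants
  set d : Fin (m+3) → Fin (m+3) → ℝ := fun i j => u i 0 * u j 1 - u i 1 * u j 0 with hd
  have hdprod : ∀ i : Fin (m+3), d (i-1) i * d (i+1) i < 0 := by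
    intro i
    exact hdet (i-1) i (i+1) ((SimpleGraph.cycleGraph (m+3)).adj_symm (hadj2 i)) (hadj1 i)
      (fun h => hne3 i h.symm)
  have hdm : ∀ i : Fin (m+3), d (i-1) i ≠ 0 := by
    intro i h
    have := hdprod i
    rw [h] at this; simp at this
  have hdp : ∀ i : Fin (m+3), d (i+1) i ≠ 0 := by
    intro i h
    have := hdprod i
    rw [h] at this; simp at this
  have husq : ∀ i : Fin (m+3), u i 0 ^ 2 + u i 1 ^ 2 ≠ 0 := by
    intro i h
    apply hu i
    funext c
    have h0 : u i 0 = 0 := by nlinarith [sq_nonneg (u i 0), sq_nonneg (u i 1)]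
    have h1 : u i 1 = 0 := by nlinarith [sq_nonneg (u i 0), sq_nonneg (u i 1)]
    fin_cases c <;> simpa
  -- the matrix
  set off : Fin (m+3) → Fin (m+3) → ℝ := fun i j => -(1 / |d i j|) with hoff
  set vp : Fin (m+3) → Fin 2 → ℝ := fun i c => off i (i-1) * u (i-1) c + off i (i+1) * u (i+1) c
    with hvp
  set t : Fin (m+3) → ℝ := fun i => (vp i 0 * u i 0 + vp i 1 * u i 1) / (u i 0 ^ 2 + u i 1 ^ 2)
    with ht
  set A : Matrix (Fin (m+3)) (Fin (m+3)) ℝ := fun i j =>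
    if i = j then - t i else if (SimpleGraph.cycleGraph (m+3)).Adj i j then off i j else 0 with hA
  -- symmetry of d in abs, of off
  have hdsymm : ∀ i j : Fin (m+3), |d i j| = |d j i| := by
    intro i j
    rw [show d j i = -(d i j) by simp [hd]; ring, abs_neg]
  -- key row identity: vp i = t i • u i
  have hrow : ∀ (i : Fin (m+3)) (c : Fin 2), vp i c = t i * u i c := by
    intro i c
    have hdv : vp i 0 * u i 1 - vp i 1 * u i 0 = 0 := by
      have : vp i 0 * u i 1 - vp i 1 * u i 0
          = -(1/|d (i-1) i|) * d (i-1) i + -(1/|d (i+1) i|) * d (i+1) i := by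
        simp only [hvp, hoff, hdsymm i (i-1), hdsymm i (i+1)]; simp only [hd]
        ring
      rw [this]
      exact aux_sign _ _ (hdprod i)
    have := aux_para (vp i 0) (vp i 1) (u i 0) (u i 1) hdv (husq i)
    fin_cases c
    · simpa [ht] using this.1
    · simpa [ht] using this.2
  -- entries of A
  have hAdiag : ∀ i : Fin (m+3), A i i = - t i := by intro i; simp [hA]
  have hAoff : ∀ i j : Fin (m+3), i ≠ j → (SimpleGraph.cycleGraph (m+3)).Adj i j → A i j = off i j := by
    intro i j hij hadjij; simp [hA, hij, hadjij]
  have hAzero : ∀ i j : Fin (m+3), i ≠ j → ¬(SimpleGraph.cycleGraph (m+3)).Adj i j → A i j = 0 := by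
    intro i j hij hnadj; simp [hA, hij, hnadj]
  have hdne : ∀ i j : Fin (m+3), (SimpleGraph.cycleGraph (m+3)).Adj i j → d i j ≠ 0 := by
    intro i j hadjij
    rcases (hadj i j).mp hadjij with h | h
    · subst h
      intro h0
      apply hdp i
      rw [show d (i+1) i = -(d i (i+1)) by simp [hd]; ring, h0, neg_zero]
    · subst h
      intro h0
      apply hdm ((i-1)+1)
      rw [show (i-1)+1-1 = i - 1 by ring, show (i-1)+1 = i by ring, show d (i-1) i = -(d i (i-1))
        by simp [hd]; ring, h0, neg_zero]
  have hoffneg : ∀ i j : Fin (m+3), (SimpleGraph.cycleGraph (m+3)).Adj i j → off i j < 0 := by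
    intro i j hadjij
    have : 0 < |d i j| := abs_pos.mpr (hdne i j hadjij)
    simp only [hoff]
    rw [neg_lt, neg_zero]
    positivity
  have hAle : ∀ i j : Fin (m+3), i ≠ j → A i j ≤ 0 := by
    intro i j hij
    by_cases hadjij : (SimpleGraph.cycleGraph (m+3)).Adj i j
    · rw [hAoff i j hij hadjij]; exact (hoffneg i j hadjij).le
    · exact le_of_eq (hAzero i j hij hadjij)
  -- symmetry
  have hsymm : A.IsHermitian := by
    rw [Matrix.IsHermitian]
    ext i j
    simp only [conjTranspose_apply, star_trivial]
    by_cases hij : j = i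
    · subst hij; rfl
    · have hji : ¬ i = j := fun h => hij h.symm
      by_cases hadjij : (SimpleGraph.cycleGraph (m+3)).Adj i j
      · rw [hAoff j i hij hadjij.symm, hAoff i j hji hadjij]
        simp only [hoff]
        rw [hdsymm j i]
      · rw [hAzero j i hij (fun h => hadjij h.symm), hAzero i j hji hadjij]
  -- rows sum: mulVec of coordinate functions vanish
  have hker : ∀ c : Fin 2, A.mulVec (fun i => u i c) = 0 := by
    intro c
    funext i
    have hsub : ({i, i-1, i+1} : Finset (Fin (m+3))) ⊆ Finset.univ := Finset.subset_univ _
    have hzero : ∀ j ∈ Finset.univ, j ∉ ({i, i-1, i+1} : Finset (Fin (m+3))) →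
        A i j * u j c = 0 := by
      intro j _ hj
      simp only [Finset.mem_insert, Finset.mem_singleton, not_or] at hj
      obtain ⟨hj1, hj2, hj3⟩ := hj
      rw [hAzero i j (fun h => hj1 h.symm) ?_, zero_mul]
      intro hadjij
      rcases (hadj i j).mp hadjij with h | h
      · exact hj3 h
      · exact hj2 h
    have hmem1 : i ∉ ({i-1, i+1} : Finset (Fin (m+3))) := by
      simp only [Finset.mem_insert, Finset.mem_singleton, not_or]
      exact ⟨fun h => hne2 i h.symm, fun h => hne1 i h.symm⟩
    have hmem2 : (i-1) ∉ ({i+1} : Finset (Fin (m+3))) := by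
      simp only [Finset.mem_singleton]
      exact fun h => hne3 i h.symm
    have hsum : (A.mulVec (fun i => u i c)) i
        = A i i * u i c + (A i (i-1) * u (i-1) c + A i (i+1) * u (i+1) c) := by
      rw [Matrix.mulVec, dotProduct, ← Finset.sum_subset hsub hzero,
        Finset.sum_insert hmem1, Finset.sum_insert hmem2, Finset.sum_singleton]
    rw [Pi.zero_apply, hsum, hAdiag, hAoff i (i-1) (fun h => hne2 i h.symm) (hadj2 i),
      hAoff i (i+1) (fun h => hne1 i h.symm) (hadj1 i)]
    have := hrow i c
    simp only [hvp] at this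
    rw [this]
    ring
  -- negative eigenvalue
  have hneg : ∃ i : Fin (m+3), hsymm.eigenvalues i < 0 := by
    by_contra hcon
    push_neg at hcon
    have hpsd : A.PosSemidef := hsymm.posSemidef_iff_eigenvalues_nonneg.mpr hcon
    set z : Fin (m+3) → ℝ := fun i => u 0 1 * u i 0 - u 0 0 * u i 1 with hz
    have hAz : A.mulVec z = 0 := by
      have : z = u 0 1 • (fun i => u i 0) - u 0 0 • (fun i => u i 1) := by
        funext i; simp [hz, smul_eq_mul]
      rw [this, Matrix.mulVec_sub, Matrix.mulVec_smul, Matrix.mulVec_smul, hker 0, hker 1]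
      simp
    set w : Fin (m+3) → ℝ := fun i => |z i| with hw
    have hwAw_le : w ⬝ᵥ A.mulVec w ≤ z ⬝ᵥ A.mulVec z := by
      simp only [dotProduct, Matrix.mulVec, Finset.mul_sum]
      apply Finset.sum_le_sum
      intro i _
      apply Finset.sum_le_sum
      intro j _
      by_cases hij : i = j
      · subst hij
        apply le_of_eq
        simp only [hw]
        linear_combination (A i i) * abs_mul_abs_self (z i)
      · have h1 : A i j ≤ 0 := hAle i j hij
        have h2 : z i * z j ≤ w i * w j := by
          simp only [hw]
          rw [← abs_mul]
          exact le_abs_self _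
        calc w i * (A i j * w j) = A i j * (w i * w j) := by ring
          _ ≤ A i j * (z i * z j) := mul_le_mul_of_nonpos_left h2 h1
          _ = z i * (A i j * z j) := by ring
    have hwAw_ge : 0 ≤ w ⬝ᵥ A.mulVec w := by
      have := hpsd.dotProduct_mulVec_nonneg w
      simpa using this
    have hwAw : w ⬝ᵥ A.mulVec w = 0 := le_antisymm (by rw [hAz] at hwAw_le; simpa using hwAw_le)
      hwAw_ge
    have hAw : A.mulVec w = 0 := by
      rw [← hpsd.dotProduct_mulVec_zero_iff w]
      simpa using hwAw
    -- row 0 of A w = 0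
    have hrow0 : ∑ j, A 0 j * w j = 0 := by
      have := congrFun hAw 0
      simpa [Matrix.mulVec, dotProduct] using this
    have hterms : ∀ j ∈ Finset.univ, A 0 j * w j ≤ 0 := by
      intro j _
      by_cases hj : (0 : Fin (m+3)) = j
      · subst hj
        have : w 0 = 0 := by simp [hw, hz]; ring
        rw [this, mul_zero]
      · exact mul_nonpos_of_nonpos_of_nonneg (hAle 0 j hj) (abs_nonneg _)
    have hterm1 : A 0 1 * w 1 = 0 :=
      (Finset.sum_eq_zero_iff_of_nonpos hterms).mp hrow0 1 (Finset.mem_univ 1)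
    have hA01 : A 0 1 < 0 := by
      have hadj01 : (SimpleGraph.cycleGraph (m+3)).Adj 0 1 := by
        have := hadj1 (0 : Fin (m+3))
        simpa using this
      rw [hAoff 0 1 (fun h => h1ne h.symm) hadj01]
      exact hoffneg 0 1 hadj01
    have hw1 : w 1 = 0 := by
      rcases mul_eq_zero.mp hterm1 with h | h
      · exact absurd h hA01.ne
      · exact h
    have hz1 : z 1 ≠ 0 := by
      have hd10 : d 1 0 ≠ 0 := by simpa using hdp (0 : Fin (m+3))
      intro h
      apply hd10
      simp only [hz] at h
      simp only [hd]
      linear_combination h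
    exact hz1 (abs_eq_zero.mp hw1)
  exact ⟨A, hsymm, fun i j hij => ⟨fun hadjij => by
      rw [hAoff i j hij hadjij]; exact hoffneg i j hadjij,
    hAzero i j hij⟩, hneg, hker 0, hker 1⟩
end

section
/- Let G be a connected graph and M a well-signed G-matrix with exactly one negative eigenvalue and corank d ≥ 2, where d equals the maximum corank κ(G) of any well-signed G-matrix with one negative eigenvalue. Let G' be a spanning subgraph of G and A a well-signed G'-matrix with ker(M) ⊆ ker(A). Then A has at most one negative eigenvalue. -/
open Matrix

/-- `M` is a well-signed `G`-matrix: negative on edges, zero on distinct non-adjacent pairs. -/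
def WellSigned {V : Type*} (G : SimpleGraph V) (M : Matrix V V ℝ) : Prop :=
  ∀ i j : V, i ≠ j → (G.Adj i j → M i j < 0) ∧ (¬ G.Adj i j → M i j = 0)

/-- The number of negative eigenvalues of a real symmetric matrix (0 if not symmetric). -/
noncomputable def negEig {V : Type*} [Fintype V] [DecidableEq V] (X : Matrix V V ℝ) : ℕ :=
  if h : X.IsHermitian then Fintype.card {i // h.eigenvalues i < 0} else 0

/-- The corank (nullity) of a matrix. -/
noncomputable def corank {V : Type*} [Fintype V] [DecidableEq V] (X : Matrix V V ℝ) : ℕ :=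
  Module.finrank ℝ (LinearMap.ker X.mulVecLin)

namespace Stmt11

open Module

set_option linter.unusedSectionVars false
set_option maxHeartbeats 1600000

variable {V : Type*} [Fintype V] [DecidableEq V]

private lemma vecMul_eq (U : Matrix V V ℝ) (x : V → ℝ) : x ᵥ* U = (star U) *ᵥ x := by
  rw [Matrix.star_eq_conjTranspose, Matrix.conjTranspose_eq_transpose_of_trivial,
    Matrix.mulVec_transpose]

section transport
variable {X Y : Matrix V V ℝ} (hX : X.IsHermitian)

private noncomputable def Um (hX : X.IsHermitian) : Matrix V V ℝ := hX.eigenvectorUnitary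

private lemma Um_star_mul : star (Um hX) * Um hX = 1 := by
  simpa [Um] using (unitary.mem_iff.mp hX.eigenvectorUnitary.2).1

private lemma Um_mul_star : Um hX * star (Um hX) = 1 := by
  simpa [Um] using (unitary.mem_iff.mp hX.eigenvectorUnitary.2).2

/-- coordinates in the eigenbasis -/
private noncomputable def coords (hX : X.IsHermitian) (x : V → ℝ) : V → ℝ :=
  star (Um hX) *ᵥ x

private noncomputable def coordsEquiv (hX : X.IsHermitian) : (V → ℝ) ≃ₗ[ℝ] (V → ℝ) :=
  LinearEquiv.ofLinear (star (Um hX)).mulVecLin (Um hX).mulVecLin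
    (by rw [← Matrix.mulVecLin_mul, Um_star_mul, Matrix.mulVecLin_one])
    (by rw [← Matrix.mulVecLin_mul, Um_mul_star, Matrix.mulVecLin_one])

private lemma coordsEquiv_apply (x : V → ℝ) : coordsEquiv hX x = coords hX x := rfl

private lemma dot_coords (x y : V → ℝ) :
    coords hX x ⬝ᵥ coords hX y = x ⬝ᵥ y := by
  rw [coords, coords, ← vecMul_eq, ← Matrix.dotProduct_mulVec, Matrix.mulVec_mulVec,
    Um_mul_star, Matrix.one_mulVec]

private lemma qform_eq (x : V → ℝ) :
    x ⬝ᵥ X *ᵥ x = ∑ i, hX.eigenvalues i * (coords hX x i) ^ 2 := by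
  conv_lhs => rw [hX.spectral_theorem]
  simp only [coords, Um, Unitary.conjStarAlgAut_apply, Unitary.coe_star]
  rw [← Matrix.mulVec_mulVec, ← Matrix.mulVec_mulVec, Matrix.dotProduct_mulVec, vecMul_eq]
  rw [show (diagonal (RCLike.ofReal ∘ hX.eigenvalues) : Matrix V V ℝ) = diagonal hX.eigenvalues by
    norm_num]
  simp only [dotProduct, Matrix.mulVec_diagonal]
  exact Finset.sum_congr rfl fun i _ => by ring

private lemma mulVec_eq_zero_iff (x : V → ℝ) :
    X *ᵥ x = 0 ↔ ∀ i, hX.eigenvalues i * coords hX x i = 0 := by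
  conv_lhs => rw [hX.spectral_theorem]
  rw [show (diagonal (RCLike.ofReal ∘ hX.eigenvalues) : Matrix V V ℝ) = diagonal hX.eigenvalues by
    norm_num]
  simp only [coords, Um, Unitary.conjStarAlgAut_apply, Unitary.coe_star]
  rw [← Matrix.mulVec_mulVec, ← Matrix.mulVec_mulVec]
  constructor
  · intro h
    have : star (Um hX) *ᵥ ((hX.eigenvectorUnitary : Matrix V V ℝ) *ᵥ (diagonal hX.eigenvalues *ᵥ (star (hX.eigenvectorUnitary : Matrix V V ℝ) *ᵥ x))) = 0 := by
      rw [h, Matrix.mulVec_zero]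
    rw [Matrix.mulVec_mulVec] at this
    rw [show star (Um hX) * (hX.eigenvectorUnitary : Matrix V V ℝ) = 1 from Um_star_mul hX,
      Matrix.one_mulVec] at this
    intro i
    have := congrFun this i
    simpa [Matrix.mulVec_diagonal, Um] using this
  · intro h
    have : diagonal hX.eigenvalues *ᵥ (star (hX.eigenvectorUnitary : Matrix V V ℝ) *ᵥ x) = 0 := by
      funext i; simpa [Matrix.mulVec_diagonal, coords, Um] using h i
    rw [this, Matrix.mulVec_zero]

end transport

section counts
variable {X Y : Matrix V V ℝ} (hX : X.IsHermitian)

lemma negEig_eq : negEig X = Fintype.card {i // hX.eigenvalues i < 0} := dif_pos hX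

lemma corank_eq : corank X = Fintype.card {i // hX.eigenvalues i = 0} := by
  classical
  have hrn : X.rank + corank X = Fintype.card V := by
    have := LinearMap.finrank_range_add_finrank_ker (X.mulVecLin)
    simpa [Matrix.rank, corank, Module.finrank_pi] using this
  have hr : X.rank = Fintype.card {i // ¬ hX.eigenvalues i = 0} := by
    rw [hX.rank_eq_card_non_zero_eigs]
  have hc : Fintype.card {i // ¬ hX.eigenvalues i = 0}
      = Fintype.card V - Fintype.card {i // hX.eigenvalues i = 0} :=
    Fintype.card_subtype_compl _
  have hle : Fintype.card {i // hX.eigenvalues i = 0} ≤ Fintype.card V :=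
    Fintype.card_subtype_le _
  omega

lemma counts_partition :
    Fintype.card {i // hX.eigenvalues i < 0} + Fintype.card {i // hX.eigenvalues i = 0}
      + Fintype.card {i // 0 < hX.eigenvalues i} = Fintype.card V := by
  classical
  simp only [Fintype.card_subtype]
  have h1 := Finset.card_filter_add_card_filter_not
    (s := (Finset.univ : Finset V)) (p := fun i => hX.eigenvalues i < 0)
  have h2 := Finset.card_filter_add_card_filter_not
    (s := (Finset.univ.filter (fun i => ¬ hX.eigenvalues i < 0)))
    (p := fun i => hX.eigenvalues i = 0)
  rw [Finset.filter_filter, Finset.filter_filter] at h2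
  have e1 : (Finset.univ.filter fun i => ¬hX.eigenvalues i < 0 ∧ hX.eigenvalues i = 0)
      = Finset.univ.filter fun i => hX.eigenvalues i = 0 := by
    apply Finset.filter_congr; intro i _; constructor
    · exact fun h => h.2
    · intro h; exact ⟨by simp [h], h⟩
  have e2 : (Finset.univ.filter fun i => ¬hX.eigenvalues i < 0 ∧ ¬hX.eigenvalues i = 0)
      = Finset.univ.filter fun i => 0 < hX.eigenvalues i := by
    apply Finset.filter_congr; intro i _; constructor
    · intro h; rcases lt_trichotomy (hX.eigenvalues i) 0 with h'|h'|h'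
      · exact absurd h' h.1
      · exact absurd h' h.2
      · exact h'
    · intro h; exact ⟨not_lt_of_gt h, ne_of_gt h⟩
  rw [e1, e2] at h2
  rw [Finset.card_univ] at h1
  omega

end counts

/-- coordinate-vanishing subspace -/
noncomputable def K (p : V → Prop) : Submodule ℝ (V → ℝ) :=
  LinearMap.ker (LinearMap.funLeft ℝ ℝ (Subtype.val : {i // p i} → V))

lemma mem_K {p : V → Prop} {y : V → ℝ} : y ∈ K p ↔ ∀ i, p i → y i = 0 := by
  constructor
  · intro h i hi
    exact congrFun h ⟨i, hi⟩
  · intro h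
    funext j
    exact h j.1 j.2

lemma finrank_K (p : V → Prop) [DecidablePred p] :
    finrank ℝ (K (V := V) p) = Fintype.card V - Fintype.card {i // p i} := by
  classical
  have hsurj : Function.Surjective (LinearMap.funLeft ℝ ℝ (Subtype.val : {i // p i} → V)) :=
    LinearMap.funLeft_surjective_of_injective ℝ ℝ _ Subtype.val_injective
  have := LinearMap.finrank_range_add_finrank_ker
    (LinearMap.funLeft ℝ ℝ (Subtype.val : {i // p i} → V))
  rw [LinearMap.range_eq_top.mpr hsurj, finrank_top] at this
  simp only [Module.finrank_pi] at this
  have hle : Fintype.card {i // p i} ≤ Fintype.card V := Fintype.card_subtype_le _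
  unfold K
  omega

section keylemmas
variable {X Y : Matrix V V ℝ}

/-- If the quadratic form of `Y` is negative definite on `W`, then
`dim W ≤ #(negative eigenvalues of Y)`. -/
lemma finrank_le_negCount (hY : Y.IsHermitian) (W : Submodule ℝ (V → ℝ))
    (hW : ∀ x ∈ W, x ≠ 0 → x ⬝ᵥ Y *ᵥ x < 0) :
    finrank ℝ W ≤ Fintype.card {i // hY.eigenvalues i < 0} := by
  classical
  by_contra hlt
  push_neg at hlt
  set P : Submodule ℝ (V → ℝ) :=
    (K (fun i => hY.eigenvalues i < 0)).comap (coordsEquiv hY : (V → ℝ) →ₗ[ℝ] (V → ℝ)) with hP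
  have hPrank : finrank ℝ P = Fintype.card V - Fintype.card {i // hY.eigenvalues i < 0} := by
    rw [hP, Submodule.comap_equiv_eq_map_symm, LinearEquiv.finrank_map_eq]
    exact finrank_K _
  have hcard : Fintype.card {i // hY.eigenvalues i < 0} ≤ Fintype.card V :=
    Fintype.card_subtype_le _
  have hsum := Submodule.finrank_sup_add_finrank_inf_eq W P
  have hsup : finrank ℝ (W ⊔ P : Submodule ℝ (V → ℝ)) ≤ Fintype.card V := by
    have := Submodule.finrank_le (W ⊔ P : Submodule ℝ (V → ℝ))
    simpa [Module.finrank_pi] using this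
  have hdim : 0 < finrank ℝ (W ⊓ P : Submodule ℝ (V → ℝ)) := by omega
  have hne : (W ⊓ P : Submodule ℝ (V → ℝ)) ≠ ⊥ := by
    intro hbot
    rw [hbot, finrank_bot] at hdim
    exact lt_irrefl 0 hdim
  obtain ⟨x, hxmem, hx0⟩ := Submodule.exists_mem_ne_zero_of_ne_bot hne
  have hq : x ⬝ᵥ Y *ᵥ x < 0 := hW x hxmem.1 hx0
  have hq2 : 0 ≤ x ⬝ᵥ Y *ᵥ x := by
    rw [qform_eq hY]
    apply Finset.sum_nonneg
    intro i _
    by_cases hp : hY.eigenvalues i < 0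
    · have hz : coords hY x i = 0 := by
        have := (mem_K.mp hxmem.2) i hp
        exact this
      rw [hz]
      simp
    · have : 0 ≤ hY.eigenvalues i := not_lt.mp hp
      positivity
  linarith

/-- If the quadratic form of `Y` is positive definite on `W`, then
`dim W ≤ #(positive eigenvalues of Y)`. -/
lemma finrank_le_posCount (hY : Y.IsHermitian) (W : Submodule ℝ (V → ℝ))
    (hW : ∀ x ∈ W, x ≠ 0 → 0 < x ⬝ᵥ Y *ᵥ x) :
    finrank ℝ W ≤ Fintype.card {i // 0 < hY.eigenvalues i} := by
  classical
  by_contra hlt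
  push_neg at hlt
  set P : Submodule ℝ (V → ℝ) :=
    (K (fun i => 0 < hY.eigenvalues i)).comap (coordsEquiv hY : (V → ℝ) →ₗ[ℝ] (V → ℝ)) with hP
  have hPrank : finrank ℝ P = Fintype.card V - Fintype.card {i // 0 < hY.eigenvalues i} := by
    rw [hP, Submodule.comap_equiv_eq_map_symm, LinearEquiv.finrank_map_eq]
    exact finrank_K _
  have hcard : Fintype.card {i // 0 < hY.eigenvalues i} ≤ Fintype.card V :=
    Fintype.card_subtype_le _
  have hsum := Submodule.finrank_sup_add_finrank_inf_eq W P
  have hsup : finrank ℝ (W ⊔ P : Submodule ℝ (V → ℝ)) ≤ Fintype.card V := by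
    have := Submodule.finrank_le (W ⊔ P : Submodule ℝ (V → ℝ))
    simpa [Module.finrank_pi] using this
  have hdim : 0 < finrank ℝ (W ⊓ P : Submodule ℝ (V → ℝ)) := by omega
  have hne : (W ⊓ P : Submodule ℝ (V → ℝ)) ≠ ⊥ := by
    intro hbot
    rw [hbot, finrank_bot] at hdim
    exact lt_irrefl 0 hdim
  obtain ⟨x, hxmem, hx0⟩ := Submodule.exists_mem_ne_zero_of_ne_bot hne
  have hq : 0 < x ⬝ᵥ Y *ᵥ x := hW x hxmem.1 hx0
  have hq2 : x ⬝ᵥ Y *ᵥ x ≤ 0 := by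
    rw [qform_eq hY]
    apply Finset.sum_nonpos
    intro i _
    by_cases hp : 0 < hY.eigenvalues i
    · have hz : coords hY x i = 0 := by
        have := (mem_K.mp hxmem.2) i hp
        exact this
      rw [hz]
      simp
    · have h0 : hY.eigenvalues i ≤ 0 := not_lt.mp hp
      have h1 : (0:ℝ) ≤ (coords hY x i) ^ 2 := sq_nonneg _
      exact mul_nonpos_of_nonpos_of_nonneg h0 h1
  linarith

end keylemmas

section gap
variable {X Y : Matrix V V ℝ}

lemma exists_neg_subspace (hX : X.IsHermitian) :
    ∃ ε : ℝ, 0 < ε ∧ ∃ W : Submodule ℝ (V → ℝ),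
      finrank ℝ W = Fintype.card {i // hX.eigenvalues i < 0} ∧
      ∀ x ∈ W, x ⬝ᵥ X *ᵥ x ≤ -ε * (x ⬝ᵥ x) := by
  classical
  set s : Finset V := Finset.univ.filter (fun i => hX.eigenvalues i < 0) with hs
  have hcards : Fintype.card {i // hX.eigenvalues i < 0} = s.card := Fintype.card_subtype _
  by_cases hne : s.Nonempty
  · set ε : ℝ := s.inf' hne (fun i => -hX.eigenvalues i) with hepsdef
    have hε : 0 < ε := by
      rw [hepsdef, Finset.lt_inf'_iff]
      intro i hi
      have : hX.eigenvalues i < 0 := (Finset.mem_filter.mp hi).2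
      linarith
    refine ⟨ε, hε, (K (fun i => ¬ hX.eigenvalues i < 0)).comap
      (coordsEquiv hX : (V → ℝ) →ₗ[ℝ] (V → ℝ)), ?_, ?_⟩
    · rw [Submodule.comap_equiv_eq_map_symm, LinearEquiv.finrank_map_eq, finrank_K]
      have h1 : Fintype.card {i // ¬ hX.eigenvalues i < 0}
          = Fintype.card V - Fintype.card {i // hX.eigenvalues i < 0} :=
        Fintype.card_subtype_compl _
      have h2 : Fintype.card {i // hX.eigenvalues i < 0} ≤ Fintype.card V :=
        Fintype.card_subtype_le _
      omega
    · intro x hx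
      rw [qform_eq hX]
      have hbound : ∀ i, hX.eigenvalues i * (coords hX x i) ^ 2 ≤ -ε * (coords hX x i) ^ 2 := by
        intro i
        by_cases hp : hX.eigenvalues i < 0
        · have : ε ≤ -hX.eigenvalues i :=
            Finset.inf'_le _ (Finset.mem_filter.mpr ⟨Finset.mem_univ i, hp⟩)
          have h2 : hX.eigenvalues i ≤ -ε := by linarith
          exact mul_le_mul_of_nonneg_right h2 (sq_nonneg _)
        · have hz : coords hX x i = 0 := (mem_K.mp hx) i hp
          rw [hz]
          simp
      calc ∑ i, hX.eigenvalues i * (coords hX x i) ^ 2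
          ≤ ∑ i, -ε * (coords hX x i) ^ 2 := Finset.sum_le_sum fun i _ => hbound i
        _ = -ε * ∑ i, (coords hX x i) ^ 2 := by rw [Finset.mul_sum]
        _ = -ε * (x ⬝ᵥ x) := by
            congr 1
            rw [← dot_coords hX x x]
            simp [dotProduct, sq]
  · refine ⟨1, one_pos, ⊥, ?_, ?_⟩
    · rw [finrank_bot, hcards]
      rw [Finset.not_nonempty_iff_eq_empty] at hne
      rw [hne, Finset.card_empty]
    · intro x hx
      rw [Submodule.mem_bot] at hx
      subst hx
      simp

lemma exists_pos_subspace (hX : X.IsHermitian) :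
    ∃ ε : ℝ, 0 < ε ∧ ∃ W : Submodule ℝ (V → ℝ),
      finrank ℝ W = Fintype.card {i // 0 < hX.eigenvalues i} ∧
      ∀ x ∈ W, ε * (x ⬝ᵥ x) ≤ x ⬝ᵥ X *ᵥ x := by
  classical
  set s : Finset V := Finset.univ.filter (fun i => 0 < hX.eigenvalues i) with hs
  have hcards : Fintype.card {i // 0 < hX.eigenvalues i} = s.card := Fintype.card_subtype _
  by_cases hne : s.Nonempty
  · set ε : ℝ := s.inf' hne (fun i => hX.eigenvalues i) with hepsdef
    have hε : 0 < ε := by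
      rw [hepsdef, Finset.lt_inf'_iff]
      intro i hi
      exact (Finset.mem_filter.mp hi).2
    refine ⟨ε, hε, (K (fun i => ¬ 0 < hX.eigenvalues i)).comap
      (coordsEquiv hX : (V → ℝ) →ₗ[ℝ] (V → ℝ)), ?_, ?_⟩
    · rw [Submodule.comap_equiv_eq_map_symm, LinearEquiv.finrank_map_eq, finrank_K]
      have h1 : Fintype.card {i // ¬ 0 < hX.eigenvalues i}
          = Fintype.card V - Fintype.card {i // 0 < hX.eigenvalues i} :=
        Fintype.card_subtype_compl _
      have h2 : Fintype.card {i // 0 < hX.eigenvalues i} ≤ Fintype.card V :=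
        Fintype.card_subtype_le _
      omega
    · intro x hx
      rw [qform_eq hX]
      have hbound : ∀ i, ε * (coords hX x i) ^ 2 ≤ hX.eigenvalues i * (coords hX x i) ^ 2 := by
        intro i
        by_cases hp : 0 < hX.eigenvalues i
        · have : ε ≤ hX.eigenvalues i :=
            Finset.inf'_le _ (Finset.mem_filter.mpr ⟨Finset.mem_univ i, hp⟩)
          exact mul_le_mul_of_nonneg_right this (sq_nonneg _)
        · have hz : coords hX x i = 0 := (mem_K.mp hx) i hp
          rw [hz]
          simp
      calc ε * (x ⬝ᵥ x) = ε * ∑ i, (coords hX x i) ^ 2 := by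
            congr 1
            rw [← dot_coords hX x x]
            simp [dotProduct, sq]
        _ = ∑ i, ε * (coords hX x i) ^ 2 := by rw [Finset.mul_sum]
        _ ≤ ∑ i, hX.eigenvalues i * (coords hX x i) ^ 2 := Finset.sum_le_sum fun i _ => hbound i
  · refine ⟨1, one_pos, ⊥, ?_, ?_⟩
    · rw [finrank_bot, hcards]
      rw [Finset.not_nonempty_iff_eq_empty] at hne
      rw [hne, Finset.card_empty]
    · intro x hx
      rw [Submodule.mem_bot] at hx
      subst hx
      simp

end gap

lemma dotProduct_self_nonneg (x : V → ℝ) : 0 ≤ x ⬝ᵥ x :=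
  Finset.sum_nonneg fun i _ => mul_self_nonneg _

lemma dotProduct_self_pos {x : V → ℝ} (hx : x ≠ 0) : 0 < x ⬝ᵥ x := by
  rcases (dotProduct_self_nonneg x).eq_or_lt with h | h
  · exfalso
    apply hx
    funext i
    have h0 : ∀ j ∈ Finset.univ, (0:ℝ) ≤ x j * x j := fun j _ => mul_self_nonneg _
    have := (Finset.sum_eq_zero_iff_of_nonneg h0).mp h.symm i (Finset.mem_univ i)
    have := mul_self_eq_zero.mp this
    simpa using this
  · exact h

/-- quadratic form bound by the entrywise ℓ¹ norm -/
lemma qform_abs_le (N : Matrix V V ℝ) (x : V → ℝ) :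
    |x ⬝ᵥ N *ᵥ x| ≤ (∑ i, ∑ j, |N i j|) * (x ⬝ᵥ x) := by
  classical
  have hxx : ∀ i j : V, |x i| * |x j| ≤ x ⬝ᵥ x := by
    intro i j
    have hi : x i ^ 2 ≤ x ⬝ᵥ x := by
      have := Finset.single_le_sum (f := fun k => x k * x k)
        (fun k _ => mul_self_nonneg (x k)) (Finset.mem_univ i)
      simpa [sq, dotProduct] using this
    have hj : x j ^ 2 ≤ x ⬝ᵥ x := by
      have := Finset.single_le_sum (f := fun k => x k * x k)
        (fun k _ => mul_self_nonneg (x k)) (Finset.mem_univ j)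
      simpa [sq, dotProduct] using this
    nlinarith [sq_nonneg (|x i| - |x j|), sq_abs (x i), sq_abs (x j),
      abs_nonneg (x i), abs_nonneg (x j)]
  have h1 : x ⬝ᵥ N *ᵥ x = ∑ i, ∑ j, x i * N i j * x j := by
    simp [dotProduct, Matrix.mulVec, Finset.mul_sum, mul_assoc]
  rw [h1, Finset.sum_mul]
  calc |∑ i, ∑ j, x i * N i j * x j| ≤ ∑ i, |∑ j, x i * N i j * x j| :=
        Finset.abs_sum_le_sum_abs _ _
    _ ≤ ∑ i, ∑ j, |x i * N i j * x j| :=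
        Finset.sum_le_sum fun i _ => Finset.abs_sum_le_sum_abs _ _
    _ ≤ ∑ i, (∑ j, |N i j|) * (x ⬝ᵥ x) := by
        apply Finset.sum_le_sum
        intro i _
        rw [Finset.sum_mul]
        apply Finset.sum_le_sum
        intro j _
        have : |x i * N i j * x j| = |N i j| * (|x i| * |x j|) := by
          rw [abs_mul, abs_mul]
          ring
        rw [this]
        exact mul_le_mul_of_nonneg_left (hxx i j) (abs_nonneg _)

/-- Persistence of eigenvalue sign-counts under small quadratic-form perturbations. -/
lemma persist {X : Matrix V V ℝ} (hX : X.IsHermitian) :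
    ∃ δ : ℝ, 0 < δ ∧ ∀ (Y : Matrix V V ℝ), Y.IsHermitian →
      (∀ x : V → ℝ, |x ⬝ᵥ (Y - X) *ᵥ x| ≤ δ * (x ⬝ᵥ x)) →
      negEig X ≤ negEig Y ∧ negEig Y + corank Y ≤ negEig X + corank X := by
  classical
  obtain ⟨ε₁, hε₁, W₁, hW₁rank, hW₁⟩ := exists_neg_subspace hX
  obtain ⟨ε₂, hε₂, W₂, hW₂rank, hW₂⟩ := exists_pos_subspace hX
  refine ⟨min ε₁ ε₂ / 2, by positivity, ?_⟩
  intro Y hY hq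
  have hδ1 : min ε₁ ε₂ / 2 < ε₁ := by
    have := min_le_left ε₁ ε₂
    linarith [lt_min hε₁ hε₂]
  have hδ2 : min ε₁ ε₂ / 2 < ε₂ := by
    have := min_le_right ε₁ ε₂
    linarith [lt_min hε₁ hε₂]
  have hqsplit : ∀ x : V → ℝ, x ⬝ᵥ Y *ᵥ x = x ⬝ᵥ X *ᵥ x + x ⬝ᵥ (Y - X) *ᵥ x := by
    intro x
    rw [Matrix.sub_mulVec, dotProduct_sub]
    ring
  have hneg : Fintype.card {i // hX.eigenvalues i < 0}
      ≤ Fintype.card {i // hY.eigenvalues i < 0} := by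
    apply le_trans (le_of_eq hW₁rank.symm)
    apply finrank_le_negCount hY W₁
    intro x hx hx0
    have h1 := hW₁ x hx
    have h2 := hq x
    have h3 := abs_le.mp h2
    have h4 : 0 < x ⬝ᵥ x := dotProduct_self_pos hx0
    rw [hqsplit x]
    nlinarith
  have hpos : Fintype.card {i // 0 < hX.eigenvalues i}
      ≤ Fintype.card {i // 0 < hY.eigenvalues i} := by
    apply le_trans (le_of_eq hW₂rank.symm)
    apply finrank_le_posCount hY W₂
    intro x hx hx0
    have h1 := hW₂ x hx
    have h2 := hq x
    have h3 := abs_le.mp h2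
    have h4 : 0 < x ⬝ᵥ x := dotProduct_self_pos hx0
    rw [hqsplit x]
    nlinarith
  have hpX := counts_partition hX
  have hpY := counts_partition hY
  rw [negEig_eq hX, negEig_eq hY, corank_eq hX, corank_eq hY]
  omega

/-- A positive semidefinite well-signed matrix of a connected graph has corank at most 1. -/
lemma corank_le_one_of_posSemidef {G : SimpleGraph V} (hGc : G.Connected)
    {X : Matrix V V ℝ} (hws : WellSigned G X) (hpsd : X.PosSemidef) :
    corank X ≤ 1 := by
  classical
  have hoffdiag : ∀ i j : V, i ≠ j → X i j ≤ 0 := by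
    intro i j hij
    by_cases hadj : G.Adj i j
    · exact le_of_lt ((hws i j hij).1 hadj)
    · exact le_of_eq ((hws i j hij).2 hadj)
  -- kernel vectors vanishing somewhere vanish everywhere
  have key : ∀ x : V → ℝ, X *ᵥ x = 0 → (∃ i, x i = 0) → x = 0 := by
    intro x hx ⟨i0, hi0⟩
    set y : V → ℝ := fun i => |x i| with hy
    have hqx : x ⬝ᵥ X *ᵥ x = 0 := by rw [hx, dotProduct_zero]
    have hexpand : ∀ z : V → ℝ, z ⬝ᵥ X *ᵥ z = ∑ i, ∑ j, z i * X i j * z j := by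
      intro z
      simp [dotProduct, Matrix.mulVec, Finset.mul_sum, mul_assoc]
    have hqy_le : y ⬝ᵥ X *ᵥ y ≤ x ⬝ᵥ X *ᵥ x := by
      rw [hexpand, hexpand]
      apply Finset.sum_le_sum
      intro i _
      apply Finset.sum_le_sum
      intro j _
      by_cases hij : i = j
      · subst hij
        simp only [hy]
        rw [show |x i| * X i i * |x i| = X i i * (|x i| * |x i|) by ring,
          abs_mul_abs_self]
        ring_nf
        exact le_refl _
      · have h1 : x i * x j ≤ |x i| * |x j| := by
          rw [← abs_mul]
          exact le_abs_self _
        have h2 : X i j ≤ 0 := hoffdiag i j hij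
        have := mul_le_mul_of_nonpos_left h1 h2
        simp only [hy]
        nlinarith
    have hqy_ge : 0 ≤ y ⬝ᵥ X *ᵥ y := by
      have := hpsd.dotProduct_mulVec_nonneg y
      simpa using this
    have hqy : y ⬝ᵥ X *ᵥ y = 0 := le_antisymm (by linarith) hqy_ge
    have hXy : X *ᵥ y = 0 := by
      have := (hpsd.dotProduct_mulVec_zero_iff y).mp (by simpa using hqy)
      exact this
    -- propagation step
    have hstep : ∀ k j : V, x k = 0 → G.Adj k j → x j = 0 := by
      intro k j hk hadj
      have hrow : ∑ m, X k m * y m = 0 := by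
        have := congrFun hXy k
        simpa [Matrix.mulVec, dotProduct] using this
      have hterms : ∀ m ∈ Finset.univ, X k m * y m ≤ 0 := by
        intro m _
        by_cases hkm : k = m
        · subst hkm
          simp [hy, hk]
        · exact mul_nonpos_of_nonpos_of_nonneg (hoffdiag k m hkm) (abs_nonneg _)
      have hzero := (Finset.sum_eq_zero_iff_of_nonpos hterms).mp hrow j (Finset.mem_univ j)
      have hXkj : X k j < 0 := (hws k j (G.ne_of_adj hadj)).1 hadj
      have : y j = 0 := by
        by_contra hyj
        have h1 : 0 < y j := lt_of_le_of_ne (abs_nonneg _) (Ne.symm hyj)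
        nlinarith
      simpa [hy] using this
    -- walk induction
    have hwalk : ∀ (u w : V) (p : G.Walk u w), x u = 0 → x w = 0 := by
      intro u w p
      induction p with
      | nil => exact id
      | cons h p ih => exact fun h0 => ih (hstep _ _ h0 h)
    funext j
    obtain ⟨p⟩ := hGc.preconnected i0 j
    exact hwalk i0 j p hi0
  -- conclude via an injective linear map to ℝ
  obtain ⟨i0⟩ := hGc.nonempty
  let f : (LinearMap.ker X.mulVecLin : Submodule ℝ (V → ℝ)) →ₗ[ℝ] ℝ :=
    (LinearMap.proj i0).comp (LinearMap.ker X.mulVecLin).subtype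
  have hinj : Function.Injective f := by
    rw [← LinearMap.ker_eq_bot]
    rw [LinearMap.ker_eq_bot']
    rintro ⟨x, hxker⟩ hfx
    have hx : X *ᵥ x = 0 := by
      simpa [Matrix.mulVecLin_apply] using (LinearMap.mem_ker.mp hxker)
    have hx0 : x i0 = 0 := hfx
    have := key x hx ⟨i0, hx0⟩
    exact Subtype.ext this
  have := LinearMap.finrank_le_finrank_of_injective hinj
  simpa [corank, Module.finrank_self] using this

end Stmt11

/-- Let `G` be connected and `M` a well-signed `G`-matrix with exactly one negative
eigenvalue and corank `d ≥ 2`, where `d = κ(G)` is the maximum corank of a well-signed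
`G`-matrix with one negative eigenvalue.  If `G'` is a spanning subgraph of `G` and `A` is
a well-signed `G'`-matrix with `ker M ⊆ ker A`, then `A` has at most one negative
eigenvalue. -/
theorem stmt_11 {V : Type*} [Fintype V] [DecidableEq V]
    (G : SimpleGraph V) (hGc : G.Connected)
    (M : Matrix V V ℝ) (hM : M.IsHermitian) (hMws : WellSigned G M)
    (hMneg : negEig M = 1)
    (d : ℕ) (hd : d = corank M) (hd2 : 2 ≤ d)
    (hκ : ∀ M' : Matrix V V ℝ, M'.IsHermitian → WellSigned G M' → negEig M' = 1 →
      corank M' ≤ d)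
    (G' : SimpleGraph V) (hG' : G' ≤ G)
    (A : Matrix V V ℝ) (hA : A.IsHermitian) (hAws : WellSigned G' A)
    (hker : LinearMap.ker M.mulVecLin ≤ LinearMap.ker A.mulVecLin) :
    negEig A ≤ 1 := by
  classical
  set B : ℝ → Matrix V V ℝ := fun t => (1 - t) • M + t • A with hB
  have hBH : ∀ t, (B t).IsHermitian := by
    intro t
    show ((1 - t) • M + t • A).IsHermitian
    unfold Matrix.IsHermitian at *
    rw [Matrix.conjTranspose_add, Matrix.conjTranspose_smul, Matrix.conjTranspose_smul, hM, hA]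
    simp
  have hB0 : B 0 = M := by show (1 - (0:ℝ)) • M + (0:ℝ) • A = M; simp
  have hB1 : B 1 = A := by show (1 - (1:ℝ)) • M + (1:ℝ) • A = A; simp
  have hBker : ∀ t, LinearMap.ker M.mulVecLin ≤ LinearMap.ker (B t).mulVecLin := by
    intro t x hx
    have hxM : M *ᵥ x = 0 := by simpa [Matrix.mulVecLin_apply] using hx
    have hxA : A *ᵥ x = 0 := by simpa [Matrix.mulVecLin_apply] using (hker hx)
    simp only [LinearMap.mem_ker, Matrix.mulVecLin_apply]
    show ((1 - t) • M + t • A) *ᵥ x = 0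
    rw [Matrix.add_mulVec, Matrix.smul_mulVec, Matrix.smul_mulVec, hxM, hxA]
    simp
  have hBcor : ∀ t, d ≤ corank (B t) := by
    intro t
    rw [hd]
    exact Submodule.finrank_mono (hBker t)
  have hBws : ∀ t, 0 ≤ t → t < 1 → WellSigned G (B t) := by
    intro t h0 h1 i j hij
    have hBentry : B t i j = (1 - t) * M i j + t * A i j := by
      show ((1 - t) • M + t • A) i j = _
      simp [Matrix.add_apply, Matrix.smul_apply, smul_eq_mul]
    constructor
    · intro hadj
      have hM' : M i j < 0 := (hMws i j hij).1 hadj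
      have hA' : A i j ≤ 0 := by
        by_cases h : G'.Adj i j
        · exact le_of_lt ((hAws i j hij).1 h)
        · exact le_of_eq ((hAws i j hij).2 h)
      rw [hBentry]
      nlinarith
    · intro hnadj
      have hM' : M i j = 0 := (hMws i j hij).2 hnadj
      have hA' : A i j = 0 := (hAws i j hij).2 (fun h => hnadj (hG' h))
      rw [hBentry, hM', hA']
      ring
  set C : ℝ := (∑ i, ∑ j, |(A - M) i j|) + 1 with hC
  have hCpos : 0 < C := by
    have : 0 ≤ ∑ i, ∑ j, |(A - M) i j| :=
      Finset.sum_nonneg fun i _ => Finset.sum_nonneg fun j _ => abs_nonneg _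
    rw [hC]; linarith
  have hqC : ∀ (u c : ℝ) (x : V → ℝ), |x ⬝ᵥ (B u - B c) *ᵥ x| ≤ |u - c| * C * (x ⬝ᵥ x) := by
    intro u c x
    have hBdiff : B u - B c = (u - c) • (A - M) := by
      show ((1 - u) • M + u • A) - ((1 - c) • M + c • A) = (u - c) • (A - M)
      ext i j
      simp [Matrix.sub_apply, Matrix.add_apply, Matrix.smul_apply, smul_eq_mul]
      ring
    rw [hBdiff]
    have h1 : x ⬝ᵥ ((u - c) • (A - M)) *ᵥ x = (u - c) * (x ⬝ᵥ (A - M) *ᵥ x) := by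
      rw [Matrix.smul_mulVec]
      simp [smul_eq_mul]
    rw [h1, abs_mul]
    have h2 := Stmt11.qform_abs_le (A - M) x
    have hxx := Stmt11.dotProduct_self_nonneg x
    have h3 : (0:ℝ) ≤ |x ⬝ᵥ (A - M) *ᵥ x| := abs_nonneg _
    have h4 : (0:ℝ) ≤ |u - c| := abs_nonneg _
    have h5 : (∑ i, ∑ j, |(A - M) i j|) * (x ⬝ᵥ x) ≤ C * (x ⬝ᵥ x) := by
      apply mul_le_mul_of_nonneg_right _ hxx
      rw [hC]; linarith
    calc |u - c| * |x ⬝ᵥ (A - M) *ᵥ x|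
        ≤ |u - c| * ((∑ i, ∑ j, |(A - M) i j|) * (x ⬝ᵥ x)) := mul_le_mul_of_nonneg_left h2 h4
      _ ≤ |u - c| * (C * (x ⬝ᵥ x)) := mul_le_mul_of_nonneg_left h5 h4
      _ = |u - c| * C * (x ⬝ᵥ x) := by ring
  have hPB : ∀ c : ℝ, ∃ δ : ℝ, 0 < δ ∧ ∀ u : ℝ, |u - c| ≤ δ →
      (negEig (B c) ≤ negEig (B u) ∧
        negEig (B u) + corank (B u) ≤ negEig (B c) + corank (B c)) := by
    intro c
    obtain ⟨δ₀, hδ₀, hpers⟩ := Stmt11.persist (hBH c)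
    refine ⟨δ₀ / C, by positivity, ?_⟩
    intro u hu
    apply hpers (B u) (hBH u)
    intro x
    have h1 := hqC u c x
    have h2 : |u - c| * C ≤ δ₀ := (le_div_iff₀ hCpos).mp hu
    have hxx := Stmt11.dotProduct_self_nonneg x
    calc |x ⬝ᵥ (B u - B c) *ᵥ x| ≤ |u - c| * C * (x ⬝ᵥ x) := h1
      _ ≤ δ₀ * (x ⬝ᵥ x) := mul_le_mul_of_nonneg_right h2 hxx
  have hOne : ∀ c, 0 ≤ c → c < 1 → negEig (B c) ≠ 0 := by
    intro c h0 h1 hzero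
    have hpsd : (B c).PosSemidef := by
      apply (hBH c).posSemidef_iff_eigenvalues_nonneg.mpr
      intro i
      by_contra hneg
      push_neg at hneg
      have hcard : 0 < Fintype.card {i // (hBH c).eigenvalues i < 0} :=
        Fintype.card_pos_iff.mpr ⟨⟨i, hneg⟩⟩
      rw [← Stmt11.negEig_eq (hBH c)] at hcard
      omega
    have hc1 := Stmt11.corank_le_one_of_posSemidef hGc (hBws c h0 h1) hpsd
    have hc2 := hBcor c
    omega
  set S : Set ℝ := {t | 0 ≤ t ∧ t ≤ 1 ∧ ∀ s, 0 ≤ s → s ≤ t → s < 1 → negEig (B s) = 1}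
    with hS
  have h0S : (0:ℝ) ∈ S := by
    refine ⟨le_refl 0, zero_le_one, ?_⟩
    intro s h0 h1 _
    have : s = 0 := le_antisymm h1 h0
    rw [this, hB0, hMneg]
  have hbdd : BddAbove S := ⟨1, fun t ht => ht.2.1⟩
  set c := sSup S with hc
  have hc0 : 0 ≤ c := le_csSup hbdd h0S
  have hc1' : c ≤ 1 := csSup_le ⟨0, h0S⟩ (fun t ht => ht.2.1)
  have hlow : ∀ s, 0 ≤ s → s < c → s < 1 → negEig (B s) = 1 := by
    intro s h0 hsc h1
    obtain ⟨t, htS, hst⟩ := exists_lt_of_lt_csSup ⟨0, h0S⟩ hsc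
    exact htS.2.2 s h0 (le_of_lt hst) h1
  have hatc : c < 1 → negEig (B c) = 1 := by
    intro hcl
    rcases eq_or_lt_of_le hc0 with h0c | h0c
    · rw [← h0c, hB0, hMneg]
    · obtain ⟨δ, hδ, hpers⟩ := hPB c
      set r := min δ c with hr
      have hrpos : 0 < r := lt_min hδ h0c
      set u := c - r/2 with hu
      have hrc : r ≤ c := min_le_right _ _
      have hrδ : r ≤ δ := min_le_left _ _
      have h0u : 0 ≤ u := by rw [hu]; linarith
      have huc : u < c := by rw [hu]; linarith
      have hu1 : u < 1 := lt_trans huc hcl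
      have hBu : negEig (B u) = 1 := hlow u h0u huc hu1
      have hdist : |u - c| ≤ δ := by
        rw [hu]
        rw [show c - r/2 - c = -(r/2) by ring, abs_neg, abs_of_nonneg (by linarith)]
        linarith
      obtain ⟨hge, _⟩ := hpers u hdist
      rw [hBu] at hge
      have hne0 := hOne c hc0 hcl
      omega
  have hceq : c = 1 := by
    by_contra hne
    have hcl : c < 1 := lt_of_le_of_ne hc1' hne
    have hBc1 : negEig (B c) = 1 := hatc hcl
    have hBccor : corank (B c) ≤ d := hκ (B c) (hBH c) (hBws c hc0 hcl) hBc1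
    obtain ⟨δ, hδ, hpers⟩ := hPB c
    set r := min δ (1 - c) with hr
    have hrpos : 0 < r := lt_min hδ (by linarith)
    have hrδ : r ≤ δ := min_le_left _ _
    have hr1c : r ≤ 1 - c := min_le_right _ _
    set u := c + r/2 with hu
    have huS : u ∈ S := by
      refine ⟨by rw [hu]; linarith, by rw [hu]; linarith, ?_⟩
      intro s h0 hsu hs1
      rcases le_or_gt s c with hsc | hsc
      · rcases lt_or_eq_of_le hsc with h | h
        · exact hlow s h0 h hs1
        · rw [h]; exact hBc1
      · have hdist : |s - c| ≤ δ := by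
          have h1 : s - c ≤ r/2 := by rw [hu] at hsu; linarith
          rw [abs_of_pos (by linarith)]
          linarith
        obtain ⟨hge, hle2⟩ := hpers s hdist
        rw [hBc1] at hge hle2
        have hcor := hBcor s
        have hne0 := hOne s (by linarith) hs1
        omega
    have : u ≤ c := le_csSup hbdd huS
    rw [hu] at this
    linarith
  obtain ⟨δ, hδ, hpers⟩ := hPB 1
  set r := min δ 1 with hr
  have hrpos : 0 < r := lt_min hδ one_pos
  have hrδ : r ≤ δ := min_le_left _ _
  have hr1 : r ≤ 1 := min_le_right _ _
  set u := 1 - r/2 with hu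
  have h0u : 0 ≤ u := by rw [hu]; linarith
  have hu1 : u < 1 := by rw [hu]; linarith
  have hBu : negEig (B u) = 1 := by
    apply hlow u h0u _ hu1
    rw [hceq]
    exact hu1
  have hdist : |u - 1| ≤ δ := by
    rw [hu, show 1 - r/2 - 1 = -(r/2) by ring, abs_neg, abs_of_nonneg (by linarith)]
    linarith
  obtain ⟨hge, _⟩ := hpers u hdist
  rw [hB1, hBu] at hge
  exact hge
end
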